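/- arXiv:1912.02381 — 5 statements merged into one kernel-verified Lean document; each statement's English description precedes it below -/
import Mathlib

section
/- Let C be a unital C*-algebra and H a Hilbert space. If y ∈ C, h ∈ H, and z ∈ C ⊗_min B(H) satisfy 0 ≤ z ≤ y ⊗ |h⟩⟨h|, then z = v ⊗ |h⟩⟨h| for some positive element v ∈ C. -/
open scoped InnerProductSpace

section OpLemmas

variable {H : Type*} [NormedAddCommGroup H] [InnerProductSpace ℂ H] [CompleteSpace H]

lemma rkOne_apply (h x : H) : ((innerSL ℂ h).smulRight h) x = (inner ℂ h x : ℂ) • h := rfl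

lemma rkOne_selfAdjoint (h : H) : IsSelfAdjoint ((innerSL ℂ h).smulRight h) := by
  rw [ContinuousLinearMap.isSelfAdjoint_iff_isSymmetric]
  intro x y
  simp only [ContinuousLinearMap.coe_coe, rkOne_apply, inner_smul_left, inner_smul_right,
    inner_conj_symm]
  ring

lemma rkOne_conj (h : H) (b : H →L[ℂ] H) :
    ((innerSL ℂ h).smulRight h) * b * ((innerSL ℂ h).smulRight h)
      = (inner ℂ h (b h) : ℂ) • ((innerSL ℂ h).smulRight h) := by
  ext x
  simp only [ContinuousLinearMap.mul_apply, rkOne_apply, map_smul, inner_smul_right,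
    ContinuousLinearMap.smul_apply, smul_smul]
  ring_nf

lemma rkOne_mul_self (h : H) :
    ((innerSL ℂ h).smulRight h) * ((innerSL ℂ h).smulRight h)
      = ((‖h‖ ^ 2 : ℝ) : ℂ) • ((innerSL ℂ h).smulRight h) := by
  ext x
  simp only [ContinuousLinearMap.mul_apply, rkOne_apply, inner_smul_right,
    ContinuousLinearMap.smul_apply, smul_smul]
  rw [inner_self_eq_norm_sq_to_K]
  push_cast
  rw [mul_comm]
  norm_cast

end OpLemmas

/-- An abstract realization of the minimal C*-tensor product `A ⊗_min B`:
a C*-algebra `T` together with a bilinear map `tmul : A → B → T` which is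
multiplicative, star-preserving, unital, injective in each slice, and whose
range spans a dense subspace of `T`. -/
structure CStarTensorProduct (A B T : Type*) [CStarAlgebra A] [CStarAlgebra B]
    [CStarAlgebra T] where
  tmul : A →ₗ[ℂ] B →ₗ[ℂ] T
  tmul_mul : ∀ (a a' : A) (b b' : B), tmul (a * a') (b * b') = tmul a b * tmul a' b'
  tmul_star : ∀ (a : A) (b : B), star (tmul a b) = tmul (star a) (star b)
  tmul_one : tmul 1 1 = 1
  left_injective : ∀ (a : A) (b : B), b ≠ 0 → tmul a b = 0 → a = 0
  right_injective : ∀ (a : A) (b : B), a ≠ 0 → tmul a b = 0 → b = 0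
  dense_span : Dense (Submodule.span ℂ {t : T | ∃ a b, t = tmul a b} : Set T)

/-- The star algebra homomorphism `a ↦ a ⊗ e` determined by a selfadjoint idempotent `e`. -/
noncomputable def CStarTensorProduct.leftHom {A B T : Type*} [CStarAlgebra A] [CStarAlgebra B]
    [CStarAlgebra T] (τ : CStarTensorProduct A B T) (e : B) (he : e * e = e)
    (hes : star e = e) : A →⋆ₙₐ[ℂ] T where
  toFun a := τ.tmul a e
  map_smul' m x := by simp
  map_zero' := by simp
  map_add' x y := by simp
  map_mul' x y := by have := τ.tmul_mul x y e e; rwa [he] at this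
  map_star' x := by rw [τ.tmul_star, hes]

lemma CStarTensorProduct.leftHom_apply {A B T : Type*} [CStarAlgebra A] [CStarAlgebra B]
    [CStarAlgebra T] (τ : CStarTensorProduct A B T) (e : B) (he : e * e = e)
    (hes : star e = e) (a : A) : τ.leftHom e he hes a = τ.tmul a e := rfl

/-- An injective star algebra homomorphism whose source positivity we exploit:
image of a nonneg element is nonneg. -/
lemma nonneg_map_of_nonneg {A T : Type*} [CStarAlgebra A] [PartialOrder A]
    [StarOrderedRing A] [CStarAlgebra T] [PartialOrder T] [StarOrderedRing T]
    (φ : A →⋆ₙₐ[ℂ] T) {x : A} (hx : 0 ≤ x) : 0 ≤ φ x := by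
  have h1 : φ x = star (φ (CFC.sqrt x)) * φ (CFC.sqrt x) := by
    rw [← map_star, ← map_mul]
    congr 1
    rw [(CFC.sqrt_nonneg (a := x)).isSelfAdjoint.star_eq, CFC.sqrt_mul_sqrt_self x hx]
  rw [h1]
  exact star_mul_self_nonneg _

/-- Pull positivity back along an injective star algebra homomorphism. -/
lemma nonneg_of_map_nonneg {A T : Type*} [CStarAlgebra A] [PartialOrder A]
    [StarOrderedRing A] [CStarAlgebra T] [PartialOrder T] [StarOrderedRing T]
    (φ : A →⋆ₙₐ[ℂ] T) (hinj : Function.Injective φ) {v : A} (hv : 0 ≤ φ v)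
    (hsa : IsSelfAdjoint v) : 0 ≤ v := by
  set n : A := v⁻ with hn
  have hn_nonneg : 0 ≤ n := CFC.negPart_nonneg v
  have hn_sa : IsSelfAdjoint n := hn_nonneg.isSelfAdjoint
  -- `n * v * n = -(n * n * n)`
  have h0 : n * v⁺ = 0 := by rw [hn]; exact CFC.negPart_mul_posPart v
  have hkey : n * v * n = -(n * n * n) := by
    nth_rw 1 [← CFC.posPart_sub_negPart v hsa]
    rw [mul_sub, sub_mul, h0, zero_mul, ← hn, zero_sub]
  -- conjugating `φ v ≥ 0` by `φ n`
  have h1 : 0 ≤ φ n * φ v * φ n := by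
    have := star_left_conjugate_nonneg hv (φ n)
    rwa [← map_star, hn_sa.star_eq] at this
  rw [← map_mul, ← map_mul, hkey, map_neg] at h1
  have h1' : φ (n * n * n) ≤ 0 := neg_nonneg.mp h1
  have h2 : 0 ≤ φ (n * n * n) := by
    refine nonneg_map_of_nonneg φ ?_
    have := star_left_conjugate_nonneg hn_nonneg n
    rwa [hn_sa.star_eq] at this
  have h3 : φ (n * n * n) = 0 := le_antisymm h1' h2
  have h4 : n * n * n = 0 := hinj (h3.trans (map_zero φ).symm)
  have h5 : n * n = 0 := by
    have h6 : star (n * n) * (n * n) = 0 := by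
      rw [star_mul, hn_sa.star_eq]
      calc n * n * (n * n) = (n * n * n) * n := by noncomm_ring
        _ = 0 := by rw [h4, zero_mul]
    exact CStarRing.star_mul_self_eq_zero_iff _ |>.mp h6
  have h7 : n = 0 := by
    have : star n * n = 0 := by rw [hn_sa.star_eq]; exact h5
    exact CStarRing.star_mul_self_eq_zero_iff _ |>.mp this
  exact (CFC.negPart_eq_zero_iff v hsa).mp h7

/-- if `C` is a unital C*-algebra, `H` a Hilbert space, `y ∈ C`, `h ∈ H`
and `z ∈ C ⊗_min B(H)` satisfies `0 ≤ z ≤ y ⊗ |h⟩⟨h|`, then `z = v ⊗ |h⟩⟨h|` for some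
positive `v ∈ C`. Here `|h⟩⟨h| = (innerSL ℂ h).smulRight h` is the map `x ↦ ⟪h, x⟫ • h`. -/
theorem factor_of_le_tmul_rankOne {C H T : Type*} [CStarAlgebra C] [PartialOrder C]
    [StarOrderedRing C] [NormedAddCommGroup H] [InnerProductSpace ℂ H] [CompleteSpace H]
    [CStarAlgebra T] [PartialOrder T] [StarOrderedRing T]
    (τ : CStarTensorProduct C (H →L[ℂ] H) T)
    (y : C) (h : H) (z : T)
    (hz : 0 ≤ z) (hle : z ≤ τ.tmul y ((innerSL ℂ h).smulRight h)) :
    ∃ v : C, 0 ≤ v ∧ z = τ.tmul v ((innerSL ℂ h).smulRight h) := by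
  classical
  set r : H →L[ℂ] H := (innerSL ℂ h).smulRight h with hr_def
  by_cases hh : h = 0
  · refine ⟨0, le_rfl, ?_⟩
    have hr0 : r = 0 := by subst hh; ext x; simp [hr_def, rkOne_apply]
    have hy0 : τ.tmul y r = 0 := by rw [hr0, map_zero]
    have hz0 : z = 0 := le_antisymm (hy0 ▸ hle) hz
    rw [hz0, map_zero, LinearMap.zero_apply]
  -- main case : h ≠ 0
  have hnh : (0:ℝ) < ‖h‖ ^ 2 := pow_pos (norm_pos_iff.mpr hh) 2
  set c₀ : ℂ := (((‖h‖ ^ 2)⁻¹ : ℝ) : ℂ) with hc₀_def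
  have hc₀_ne : c₀ ≠ 0 := by
    rw [hc₀_def]
    exact Complex.ofReal_ne_zero.mpr (inv_ne_zero (ne_of_gt hnh))
  have hc₀_mul : c₀ * ((‖h‖ ^ 2 : ℝ) : ℂ) = 1 := by
    rw [hc₀_def, ← Complex.ofReal_mul, inv_mul_cancel₀ (ne_of_gt hnh), Complex.ofReal_one]
  set e : H →L[ℂ] H := c₀ • r with he_def
  have hr_ne : r ≠ 0 := by
    intro hcon
    have h1 : (inner ℂ h h : ℂ) • h = 0 := by
      have := congrArg (fun f : H →L[ℂ] H => f h) hcon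
      simpa [hr_def, rkOne_apply] using this
    rcases smul_eq_zero.mp h1 with h2 | h2
    · exact hh (inner_self_eq_zero.mp h2)
    · exact hh h2
  have he_ne : e ≠ 0 := smul_ne_zero hc₀_ne hr_ne
  have he_mul : e * e = e := by
    rw [he_def, smul_mul_smul_comm, rkOne_mul_self, smul_smul, mul_assoc, hc₀_mul, mul_one]
  have he_star : star e = e := by
    rw [he_def, star_smul, (rkOne_selfAdjoint h).star_eq, hc₀_def, Complex.star_def,
      Complex.conj_ofReal]
  have hk : r * r = ((‖h‖ ^ 2 : ℝ) : ℂ) • r := by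
    rw [hr_def]; exact rkOne_mul_self h
  have hrrr : r * r * r = (((‖h‖ ^ 2 : ℝ) : ℂ) * ((‖h‖ ^ 2 : ℝ) : ℂ)) • r := by
    rw [hk, smul_mul_assoc, hk, smul_smul]
  have here' : e * r * e = r := by
    have h1 : e * r * e = (c₀ * c₀) • (r * r * r) := by
      rw [he_def, smul_mul_assoc, smul_mul_assoc, mul_smul_comm, smul_smul]
    rw [h1, hrrr, smul_smul]
    have h2 : c₀ * c₀ * (((‖h‖ ^ 2 : ℝ) : ℂ) * ((‖h‖ ^ 2 : ℝ) : ℂ)) = 1 := by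
      calc c₀ * c₀ * (((‖h‖ ^ 2 : ℝ) : ℂ) * ((‖h‖ ^ 2 : ℝ) : ℂ))
          = (c₀ * ((‖h‖ ^ 2 : ℝ) : ℂ)) * (c₀ * ((‖h‖ ^ 2 : ℝ) : ℂ)) := by ring
        _ = 1 := by rw [hc₀_mul, one_mul]
    rw [h2, one_smul]
  have hebe : ∀ b : H →L[ℂ] H, e * b * e = (c₀ * (inner ℂ h (b h) : ℂ)) • e := by
    intro b
    have h1 : e * b * e = (c₀ * c₀) • (r * b * r) := by
      rw [he_def, smul_mul_assoc, smul_mul_assoc, mul_smul_comm, smul_smul]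
    have h2 : r * b * r = (inner ℂ h (b h) : ℂ) • r := by
      rw [hr_def]; exact rkOne_conj h b
    rw [h1, h2, smul_smul, he_def, smul_smul]
    congr 1
    ring
  -- the star algebra homomorphism `φ : c ↦ c ⊗ e`
  set φ : C →⋆ₙₐ[ℂ] T := τ.leftHom e he_mul he_star with hφ_def
  have hφ_apply : ∀ c : C, φ c = τ.tmul c e := fun c => rfl
  have hφinj : Function.Injective φ := by
    intro a b hab
    have hab' : τ.tmul (a - b) e = 0 := by
      rw [map_sub, LinearMap.sub_apply, ← hφ_apply, ← hφ_apply, hab, sub_self]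
    have := τ.left_injective _ _ he_ne hab'
    exact sub_eq_zero.mp this
  -- the projection `P = 1 ⊗ e`
  set P : T := τ.tmul 1 e with hP_def
  have hPP : P * P = P := by
    have := τ.tmul_mul 1 1 e e
    rw [he_mul, one_mul] at this
    exact this.symm
  have hP_star : star P = P := by
    rw [hP_def, τ.tmul_star, star_one, he_star]
  set Y : T := τ.tmul y r with hY_def
  have hPYP : P * Y * P = Y := by
    rw [hP_def, hY_def, ← τ.tmul_mul, ← τ.tmul_mul, one_mul, mul_one, here']
  set Q : T := 1 - P with hQ_def
  have hQ_star : star Q = Q := by rw [hQ_def, star_sub, star_one, hP_star]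
  have hQP : Q * P = 0 := by rw [hQ_def, sub_mul, one_mul, hPP, sub_self]
  have hPQ : P * Q = 0 := by rw [hQ_def, mul_sub, mul_one, hPP, sub_self]
  have hQYQ : Q * Y * Q = 0 := by
    have h1 : Q * Y * Q = (Q * P) * Y * (P * Q) := by nth_rw 1 [← hPYP]; simp only [mul_assoc]
    rw [h1, hQP, hPQ, zero_mul, mul_zero]
  have hQzQ : Q * z * Q = 0 := by
    have h1 : 0 ≤ star Q * z * Q := star_left_conjugate_nonneg hz Q
    have h2 : star Q * z * Q ≤ star Q * Y * Q := star_left_conjugate_le_conjugate hle Q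
    rw [hQ_star] at h1 h2
    rw [hQYQ] at h2
    exact le_antisymm h2 h1
  -- deduce `z * Q = 0`, hence `P * z * P = z`
  set s : T := CFC.sqrt z with hs_def
  have hss : s * s = z := CFC.sqrt_mul_sqrt_self z hz
  have hs_star : star s = s := (CFC.sqrt_nonneg (a := z)).isSelfAdjoint.star_eq
  have hsQ : s * Q = 0 := by
    have h1 : star (s * Q) * (s * Q) = 0 := by
      rw [star_mul, hs_star, hQ_star]
      calc Q * s * (s * Q) = Q * (s * s) * Q := by noncomm_ring
        _ = Q * z * Q := by rw [hss]
        _ = 0 := hQzQ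
    exact CStarRing.star_mul_self_eq_zero_iff _ |>.mp h1
  have hzQ : z * Q = 0 := by
    calc z * Q = s * (s * Q) := by rw [← hss, mul_assoc]
      _ = 0 := by rw [hsQ, mul_zero]
  have hzP : z * P = z := by
    have := hzQ
    rw [hQ_def, mul_sub, mul_one, sub_eq_zero] at this
    exact this.symm
  have hz_star : star z = z := hz.isSelfAdjoint.star_eq
  have hPz : P * z = z := by
    have := congrArg star hzP
    rwa [star_mul, hP_star, hz_star] at this
  have hPzP : P * z * P = z := by rw [hPz, hzP]
  -- `z` lies in the (closed) range of `φ`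
  set S : Set T := Set.range φ with hS_def
  have hS_closed : IsClosed S :=
    ((NonUnitalStarAlgHom.isometry φ hφinj).isClosedEmbedding).isClosed_range
  have hmapsto : Set.MapsTo (fun t : T => P * t * P)
      (Submodule.span ℂ {t : T | ∃ a b, t = τ.tmul a b} : Set T) S := by
    intro t ht
    simp only [SetLike.mem_coe] at ht
    induction ht using Submodule.span_induction with
    | mem t ht =>
      obtain ⟨a, b, rfl⟩ := ht
      show P * τ.tmul a b * P ∈ S
      have h1 : P * τ.tmul a b * P = τ.tmul (1 * a * 1) (e * b * e) := by
        rw [hP_def, ← τ.tmul_mul, ← τ.tmul_mul]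
      rw [h1, hebe, one_mul, mul_one, map_smul]
      exact ⟨(c₀ * (inner ℂ h (b h) : ℂ)) • a, by rw [map_smul]; rfl⟩
    | zero => exact ⟨0, by simpa using (map_zero φ)⟩
    | add u w hu hw ihu ihw =>
      obtain ⟨cu, hcu⟩ := ihu
      obtain ⟨cw, hcw⟩ := ihw
      refine ⟨cu + cw, ?_⟩
      show φ (cu + cw) = P * (u + w) * P
      rw [map_add, hcu, hcw]
      noncomm_ring
    | smul c u hu ihu =>
      obtain ⟨cu, hcu⟩ := ihu
      refine ⟨c • cu, ?_⟩
      show φ (c • cu) = P * (c • u) * P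
      rw [map_smul, hcu]
      simp only [smul_mul_assoc, mul_smul_comm]
  have hzS : z ∈ S := by
    have hcont : Continuous fun t : T => P * t * P :=
      ((continuous_const.mul continuous_id).mul continuous_const)
    have hcl := hmapsto.closure_left hcont hS_closed
    have hzcl : z ∈ closure (Submodule.span ℂ {t : T | ∃ a b, t = τ.tmul a b} : Set T) :=
      τ.dense_span z
    have := hcl hzcl
    simpa only [hPzP] using this
  obtain ⟨v₀, hv₀⟩ := hzS
  -- `v₀` is selfadjoint and positive
  have hv₀_sa : IsSelfAdjoint v₀ := by
    have h1 : φ (star v₀) = φ v₀ := by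
      rw [map_star, hv₀, hz_star]
    exact hφinj h1
  have hv₀_nonneg : 0 ≤ v₀ := nonneg_of_map_nonneg φ hφinj (hv₀ ▸ hz) hv₀_sa
  -- convert back from `e` to `r`
  refine ⟨c₀ • v₀, ?_, ?_⟩
  · -- positivity of `c₀ • v₀`
    set t : ℂ := ((‖h‖⁻¹ : ℝ) : ℂ) with ht_def
    have htt : t * t = c₀ := by
      rw [ht_def, hc₀_def, ← Complex.ofReal_mul]
      congr 1
      rw [← mul_inv, ← sq]
    set u : C := CFC.sqrt v₀ with hu_def
    have huu : u * u = v₀ := CFC.sqrt_mul_sqrt_self v₀ hv₀_nonneg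
    have hu_star : star u = u := (CFC.sqrt_nonneg (a := v₀)).isSelfAdjoint.star_eq
    have hkey : c₀ • v₀ = star (t • u) * (t • u) := by
      rw [star_smul, hu_star, ht_def, Complex.star_def, Complex.conj_ofReal,
        smul_mul_smul_comm, huu, ← ht_def, htt]
    rw [hkey]
    exact star_mul_self_nonneg _
  · -- `z = (c₀ • v₀) ⊗ r`
    have h1 : τ.tmul v₀ e = z := hv₀
    rw [map_smul, LinearMap.smul_apply, ← h1, he_def, map_smul]
end

section
/- Let A, C be C*-algebras, H a Hilbert space, β : A ⊗_min B(H) → C ⊗_min B(H) positive linear with α ⊗ id - β positive for a linear map α : A → C. Then for all g, h ∈ H and positive a ∈ A, the elements γ_g(a), γ_h(a) ∈ C determined by β(a ⊗ |g⟩⟨g|) = γ_g(a) ⊗ |g⟩⟨g| and β(a ⊗ |h⟩⟨h|) = γ_h(a) ⊗ |h⟩⟨h| coincide when g ⊥ h; that is, γ_g(a) = γ_h(a). -/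
open scoped InnerProductSpace

section AuxCStar

variable {T : Type*} [CStarAlgebra T] [PartialOrder T] [StarOrderedRing T]

/-- In a C*-algebra, if `0 ≤ x ≤ y` and `y` is supported on a projection `q`,
then so is `x`. -/
lemma compress_eq_of_le {q x y : T} (hq : star q = q) (hq2 : q * q = q)
    (hx : 0 ≤ x) (hxy : 0 ≤ y - x) (hyq : y * q = y) (hqy : q * y = y) :
    q * x * q = x := by
  set r : T := 1 - q with hrdef
  have hr_star : star r = r := by simp [hrdef, hq]
  have hry : r * y = 0 := by simp [hrdef, sub_mul, hqy]
  have hryr : r * y * r = 0 := by rw [hry, zero_mul]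
  have hrxr_nonneg : 0 ≤ r * x * r := by
    simpa [hr_star] using star_left_conjugate_nonneg hx r
  have hrxr_le : r * x * r ≤ 0 := by
    have h1 : 0 ≤ star r * (y - x) * r := star_left_conjugate_nonneg hxy r
    rw [hr_star] at h1
    have h2 : r * (y - x) * r = -(r * x * r) := by
      have h3 : r * (y - x) * r = r * y * r - r * x * r := by noncomm_ring
      rw [h3, hryr, zero_sub]
    rw [h2] at h1
    exact neg_nonneg.mp h1
  have hrxr : r * x * r = 0 := le_antisymm hrxr_le hrxr_nonneg
  set s : T := CFC.sqrt x with hsdef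
  have hs_nonneg : 0 ≤ s := CFC.sqrt_nonneg x
  have hs_sa : star s = s := IsSelfAdjoint.of_nonneg hs_nonneg
  have hss : s * s = x := CFC.sqrt_mul_sqrt_self x hx
  have hsr0 : star (s * r) * (s * r) = 0 := by
    rw [star_mul, hr_star, hs_sa]
    calc r * s * (s * r) = r * (s * s) * r := by noncomm_ring
      _ = r * x * r := by rw [hss]
      _ = 0 := hrxr
  have hsr : s * r = 0 := (CStarRing.star_mul_self_eq_zero_iff _).mp hsr0
  have hxr : x * r = 0 := by
    calc x * r = s * (s * r) := by rw [← mul_assoc, hss]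
      _ = 0 := by rw [hsr, mul_zero]
  have hx_sa : star x = x := IsSelfAdjoint.of_nonneg hx
  have hrx : r * x = 0 := by
    have h3 := congrArg star hxr
    rwa [star_mul, hr_star, hx_sa, star_zero] at h3
  have hxq : x * q = x := by
    have h0 : x * r = x - x * q := by rw [hrdef, mul_sub, mul_one]
    rw [hxr] at h0
    exact (sub_eq_zero.mp h0.symm).symm
  have hqx : q * x = x := by
    have h0 : r * x = x - q * x := by rw [hrdef, sub_mul, one_mul]
    rw [hrx] at h0
    exact (sub_eq_zero.mp h0.symm).symm
  rw [hqx, hxq]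

end AuxCStar

/-- Positivity of elementary tensors with a positive left slot and a projection
right slot, in an abstract C*-tensor product. -/
lemma CStarTensorProduct.tmul_nonneg {A B T : Type*} [CStarAlgebra A] [PartialOrder A]
    [StarOrderedRing A] [CStarAlgebra B] [CStarAlgebra T] [PartialOrder T]
    [StarOrderedRing T] (τ : CStarTensorProduct A B T) {a : A} {p : B}
    (ha : 0 ≤ a) (hps : star p = p) (hp2 : p * p = p) : 0 ≤ τ.tmul a p := by
  have hp : p = star p * p := by rw [hps, hp2]
  rw [StarOrderedRing.nonneg_iff] at ha
  induction ha using AddSubmonoid.closure_induction with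
  | mem z hz =>
    obtain ⟨s, rfl⟩ := hz
    rw [hp, τ.tmul_mul, ← τ.tmul_star]
    exact star_mul_self_nonneg _
  | zero => simp
  | add z w hz hw ihz ihw =>
    rw [map_add, LinearMap.add_apply]
    exact add_nonneg ihz ihw

section Ops
variable {H : Type*} [NormedAddCommGroup H] [InnerProductSpace ℂ H] [CompleteSpace H]

/-- The rank-one operator `|v⟩⟨v|`. -/
noncomputable def rk (v : H) : H →L[ℂ] H := (innerSL ℂ v).smulRight v

lemma rk_apply (v x : H) : rk v x = ⟪v, x⟫_ℂ • v := rfl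

lemma rk_star (v : H) : star (rk v) = rk v := by
  rw [ContinuousLinearMap.star_eq_adjoint]
  refine ((ContinuousLinearMap.eq_adjoint_iff (rk v) (rk v)).2 ?_).symm
  intro x y
  simp only [rk_apply, inner_smul_left, inner_smul_right, inner_conj_symm]
  ring

lemma rk_real_smul (r : ℝ) (v : H) : rk ((r : ℂ) • v) = ((r : ℂ) ^ 2) • rk v := by
  ext x
  simp only [rk_apply, ContinuousLinearMap.smul_apply, inner_smul_left,
    Complex.conj_ofReal, smul_smul]
  ring_nf

end Ops

section Identities
variable {H : Type*} [NormedAddCommGroup H] [InnerProductSpace ℂ H] [CompleteSpace H]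
variable {g h : H} (hgg : ⟪g, g⟫_ℂ = 1) (hhh : ⟪h, h⟫_ℂ = 1)
  (hgh : ⟪g, h⟫_ℂ = 0) (hhg : ⟪h, g⟫_ℂ = 0)

include hgg hhh hgh hhg

lemma op_sum : (2:ℂ)⁻¹ • rk (g + h) + (2:ℂ)⁻¹ • rk (g - h) = rk g + rk h := by
  ext x
  simp only [ContinuousLinearMap.add_apply, ContinuousLinearMap.smul_apply, rk_apply,
    inner_add_left, inner_sub_left, smul_add, smul_sub, smul_smul]
  module

lemma op_pp : ((2:ℂ)⁻¹ • rk (g + h)) * ((2:ℂ)⁻¹ • rk (g + h)) = (2:ℂ)⁻¹ • rk (g + h) := by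
  ext x
  simp only [ContinuousLinearMap.mul_apply, ContinuousLinearMap.smul_apply, rk_apply,
    inner_smul_right, inner_add_left, inner_add_right, inner_sub_left, inner_sub_right,
    hgg, hhh, hgh, hhg, smul_smul]
  module

lemma op_mm : ((2:ℂ)⁻¹ • rk (g - h)) * ((2:ℂ)⁻¹ • rk (g - h)) = (2:ℂ)⁻¹ • rk (g - h) := by
  ext x
  simp only [ContinuousLinearMap.mul_apply, ContinuousLinearMap.smul_apply, rk_apply,
    inner_smul_right, inner_add_left, inner_add_right, inner_sub_left, inner_sub_right,
    hgg, hhh, hgh, hhg, smul_smul]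
  module

lemma op_pm : ((2:ℂ)⁻¹ • rk (g + h)) * ((2:ℂ)⁻¹ • rk (g - h)) = 0 := by
  ext x
  simp only [ContinuousLinearMap.mul_apply, ContinuousLinearMap.smul_apply, rk_apply,
    inner_smul_right, inner_add_left, inner_add_right, inner_sub_left, inner_sub_right,
    hgg, hhh, hgh, hhg, smul_smul, ContinuousLinearMap.zero_apply]
  module

lemma op_mp : ((2:ℂ)⁻¹ • rk (g - h)) * ((2:ℂ)⁻¹ • rk (g + h)) = 0 := by
  ext x
  simp only [ContinuousLinearMap.mul_apply, ContinuousLinearMap.smul_apply, rk_apply,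
    inner_smul_right, inner_add_left, inner_add_right, inner_sub_left, inner_sub_right,
    hgg, hhh, hgh, hhg, smul_smul, ContinuousLinearMap.zero_apply]
  module

lemma op_pgp : ((2:ℂ)⁻¹ • rk (g + h)) * rk g * ((2:ℂ)⁻¹ • rk (g + h))
    = (2:ℂ)⁻¹ • ((2:ℂ)⁻¹ • rk (g + h)) := by
  ext x
  simp only [ContinuousLinearMap.mul_apply, ContinuousLinearMap.smul_apply, rk_apply,
    inner_smul_right, inner_add_left, inner_add_right, inner_sub_left, inner_sub_right,
    hgg, hhh, hgh, hhg, smul_smul]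
  module

lemma op_php : ((2:ℂ)⁻¹ • rk (g + h)) * rk h * ((2:ℂ)⁻¹ • rk (g + h))
    = (2:ℂ)⁻¹ • ((2:ℂ)⁻¹ • rk (g + h)) := by
  ext x
  simp only [ContinuousLinearMap.mul_apply, ContinuousLinearMap.smul_apply, rk_apply,
    inner_smul_right, inner_add_left, inner_add_right, inner_sub_left, inner_sub_right,
    hgg, hhh, hgh, hhg, smul_smul]
  module

lemma op_mgm : ((2:ℂ)⁻¹ • rk (g - h)) * rk g * ((2:ℂ)⁻¹ • rk (g - h))
    = (2:ℂ)⁻¹ • ((2:ℂ)⁻¹ • rk (g - h)) := by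
  ext x
  simp only [ContinuousLinearMap.mul_apply, ContinuousLinearMap.smul_apply, rk_apply,
    inner_smul_right, inner_add_left, inner_add_right, inner_sub_left, inner_sub_right,
    hgg, hhh, hgh, hhg, smul_smul]
  module

lemma op_mhm : ((2:ℂ)⁻¹ • rk (g - h)) * rk h * ((2:ℂ)⁻¹ • rk (g - h))
    = (2:ℂ)⁻¹ • ((2:ℂ)⁻¹ • rk (g - h)) := by
  ext x
  simp only [ContinuousLinearMap.mul_apply, ContinuousLinearMap.smul_apply, rk_apply,
    inner_smul_right, inner_add_left, inner_add_right, inner_sub_left, inner_sub_right,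
    hgg, hhh, hgh, hhg, smul_smul]
  module

lemma op_ne : rk g - rk h ≠ (0 : H →L[ℂ] H) := by
  intro h0
  have h1 : (rk g - rk h) g = 0 := by rw [h0]; rfl
  simp only [ContinuousLinearMap.sub_apply, rk_apply, hgg, hhg, one_smul, zero_smul,
    sub_zero] at h1
  have h2 : ⟪g, g⟫_ℂ = 0 := by rw [h1, inner_zero_right]
  rw [hgg] at h2
  exact one_ne_zero h2

end Identities

/-- The key case of the polarization step, for unit vectors. -/
theorem polarization_key {A C H TA TC : Type*}
    [CStarAlgebra A] [PartialOrder A] [StarOrderedRing A]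
    [CStarAlgebra C] [PartialOrder C] [StarOrderedRing C]
    [NormedAddCommGroup H] [InnerProductSpace ℂ H] [CompleteSpace H]
    [CStarAlgebra TA] [PartialOrder TA] [StarOrderedRing TA]
    [CStarAlgebra TC] [PartialOrder TC] [StarOrderedRing TC]
    (τA : CStarTensorProduct A (H →L[ℂ] H) TA)
    (τC : CStarTensorProduct C (H →L[ℂ] H) TC)
    (α : A →ₗ[ℂ] C) (αid : TA →ₗ[ℂ] TC)
    (hαid : ∀ (a : A) (S : H →L[ℂ] H), αid (τA.tmul a S) = τC.tmul (α a) S)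
    (β : TA →ₗ[ℂ] TC)
    (hβpos : ∀ x : TA, 0 ≤ x → 0 ≤ β x)
    (hdom : ∀ x : TA, 0 ≤ x → 0 ≤ αid x - β x)
    (g h : H) (hg1 : ‖g‖ = 1) (hh1 : ‖h‖ = 1) (hgh : ⟪g, h⟫_ℂ = 0)
    (a : A) (ha : 0 ≤ a) (cg ch : C)
    (hcg : β (τA.tmul a (rk g)) = τC.tmul cg (rk g))
    (hch : β (τA.tmul a (rk h)) = τC.tmul ch (rk h)) :
    cg = ch := by
  have hgg : ⟪g, g⟫_ℂ = 1 := by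
    rw [inner_self_eq_norm_sq_to_K, hg1]; norm_num
  have hhh : ⟪h, h⟫_ℂ = 1 := by
    rw [inner_self_eq_norm_sq_to_K, hh1]; norm_num
  have hhg : ⟪h, g⟫_ℂ = 0 := by rw [← inner_conj_symm, hgh, map_zero]
  set p : H →L[ℂ] H := (2:ℂ)⁻¹ • rk (g + h) with hpdef
  set m : H →L[ℂ] H := (2:ℂ)⁻¹ • rk (g - h) with hmdef
  have hps : star p = p := by
    rw [hpdef, star_smul, rk_star]
    norm_num
  have hms : star m = m := by
    rw [hmdef, star_smul, rk_star]
    norm_num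
  have hpp : p * p = p := op_pp hgg hhh hgh hhg
  have hmm : m * m = m := op_mm hgg hhh hgh hhg
  have hpm : p * m = 0 := op_pm hgg hhh hgh hhg
  have hmp : m * p = 0 := op_mp hgg hhh hgh hhg
  set qp : TC := τC.tmul 1 p with hqpdef
  set qm : TC := τC.tmul 1 m with hqmdef
  have hqp_star : star qp = qp := by rw [hqpdef, τC.tmul_star, star_one, hps]
  have hqm_star : star qm = qm := by rw [hqmdef, τC.tmul_star, star_one, hms]
  have hqp2 : qp * qp = qp := by rw [hqpdef, ← τC.tmul_mul, one_mul, hpp]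
  have hqm2 : qm * qm = qm := by rw [hqmdef, ← τC.tmul_mul, one_mul, hmm]
  have hτp_nonneg : 0 ≤ τA.tmul a p := τA.tmul_nonneg ha hps hpp
  have hτm_nonneg : 0 ≤ τA.tmul a m := τA.tmul_nonneg ha hms hmm
  set x : TC := β (τA.tmul a p) with hxdef
  set x' : TC := β (τA.tmul a m) with hx'def
  have hx : 0 ≤ x := hβpos _ hτp_nonneg
  have hx' : 0 ≤ x' := hβpos _ hτm_nonneg
  -- the dominating elements are supported on `qp`, `qm`
  have hcomp : qp * x * qp = x := by
    refine compress_eq_of_le (y := τC.tmul (α a) p) hqp_star hqp2 hx ?_ ?_ ?_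
    · rw [← hαid]; exact hdom _ hτp_nonneg
    · rw [hqpdef, ← τC.tmul_mul, mul_one, hpp]
    · rw [hqpdef, ← τC.tmul_mul, one_mul, hpp]
  have hcomp' : qm * x' * qm = x' := by
    refine compress_eq_of_le (y := τC.tmul (α a) m) hqm_star hqm2 hx' ?_ ?_ ?_
    · rw [← hαid]; exact hdom _ hτm_nonneg
    · rw [hqmdef, ← τC.tmul_mul, mul_one, hmm]
    · rw [hqmdef, ← τC.tmul_mul, one_mul, hmm]
  have hqpqm : qp * qm = 0 := by
    rw [hqpdef, hqmdef, ← τC.tmul_mul, one_mul, hpm, map_zero]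
  have hqmqp : qm * qp = 0 := by
    rw [hqpdef, hqmdef, ← τC.tmul_mul, one_mul, hmp, map_zero]
  have hcross : qp * x' * qp = 0 := by
    calc qp * x' * qp = qp * (qm * x' * qm) * qp := by rw [hcomp']
      _ = (qp * qm) * x' * (qm * qp) := by noncomm_ring
      _ = 0 := by rw [hqpqm, hqmqp, zero_mul, mul_zero]
  have hcross' : qm * x * qm = 0 := by
    calc qm * x * qm = qm * (qp * x * qp) * qm := by rw [hcomp]
      _ = (qm * qp) * x * (qp * qm) := by noncomm_ring
      _ = 0 := by rw [hqmqp, hqpqm, zero_mul, mul_zero]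
  -- the sum
  have hsum : x + x' = τC.tmul cg (rk g) + τC.tmul ch (rk h) := by
    have h1 : τA.tmul a p + τA.tmul a m = τA.tmul a (rk g) + τA.tmul a (rk h) := by
      rw [← map_add, hpdef, hmdef, op_sum hgg hhh hgh hhg, map_add]
    calc x + x' = β (τA.tmul a p + τA.tmul a m) := (map_add β _ _).symm
      _ = β (τA.tmul a (rk g)) + β (τA.tmul a (rk h)) := by rw [h1, map_add]
      _ = _ := by rw [hcg, hch]
  -- compressions of the elementary tensors
  have hAg : qp * τC.tmul cg (rk g) * qp = (2:ℂ)⁻¹ • τC.tmul cg p := by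
    rw [hqpdef, ← τC.tmul_mul, ← τC.tmul_mul, one_mul, mul_one,
      op_pgp hgg hhh hgh hhg, map_smul]
  have hAh : qp * τC.tmul ch (rk h) * qp = (2:ℂ)⁻¹ • τC.tmul ch p := by
    rw [hqpdef, ← τC.tmul_mul, ← τC.tmul_mul, one_mul, mul_one,
      op_php hgg hhh hgh hhg, map_smul]
  have hBg : qm * τC.tmul cg (rk g) * qm = (2:ℂ)⁻¹ • τC.tmul cg m := by
    rw [hqmdef, ← τC.tmul_mul, ← τC.tmul_mul, one_mul, mul_one,
      op_mgm hgg hhh hgh hhg, map_smul]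
  have hBh : qm * τC.tmul ch (rk h) * qm = (2:ℂ)⁻¹ • τC.tmul ch m := by
    rw [hqmdef, ← τC.tmul_mul, ← τC.tmul_mul, one_mul, mul_one,
      op_mhm hgg hhh hgh hhg, map_smul]
  set e : C := (2:ℂ)⁻¹ • (cg + ch) with hedef
  have hxval : x = τC.tmul e p := by
    have h1 : x = qp * (x + x') * qp := by
      rw [mul_add, add_mul, hcomp, hcross, add_zero]
    have h6 : τC.tmul e = (2:ℂ)⁻¹ • τC.tmul (cg + ch) := by rw [hedef, map_smul]
    have hep : τC.tmul e p = (2:ℂ)⁻¹ • (τC.tmul cg p + τC.tmul ch p) := by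
      rw [h6, LinearMap.smul_apply, map_add, LinearMap.add_apply]
    rw [h1, hsum, mul_add, add_mul, hAg, hAh, ← smul_add, hep]
  have hx'val : x' = τC.tmul e m := by
    have h1 : x' = qm * (x + x') * qm := by
      rw [mul_add, add_mul, hcomp', hcross', zero_add]
    have h6 : τC.tmul e = (2:ℂ)⁻¹ • τC.tmul (cg + ch) := by rw [hedef, map_smul]
    have hem : τC.tmul e m = (2:ℂ)⁻¹ • (τC.tmul cg m + τC.tmul ch m) := by
      rw [h6, LinearMap.smul_apply, map_add, LinearMap.add_apply]
    rw [h1, hsum, mul_add, add_mul, hBg, hBh, ← smul_add, hem]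
  have hee : τC.tmul cg (rk g) + τC.tmul ch (rk h)
      = τC.tmul e (rk g) + τC.tmul e (rk h) := by
    rw [← hsum, hxval, hx'val, ← map_add, hpdef, hmdef, op_sum hgg hhh hgh hhg, map_add]
  have hopp : cg - e = -(ch - e) := by rw [hedef]; module
  have h2 : τC.tmul (cg - e) (rk g) + τC.tmul (ch - e) (rk h) = 0 := by
    simp only [map_sub, LinearMap.sub_apply]
    rw [sub_add_sub_comm, hee, sub_self]
  have hz : τC.tmul (cg - e) (rk g - rk h) = 0 := by
    calc τC.tmul (cg - e) (rk g - rk h)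
        = τC.tmul (cg - e) (rk g) - τC.tmul (cg - e) (rk h) := map_sub _ _ _
      _ = τC.tmul (cg - e) (rk g) + τC.tmul (ch - e) (rk h) := by
          have h5 : τC.tmul (cg - e) (rk h) = -τC.tmul (ch - e) (rk h) := by
            rw [hopp, map_neg, LinearMap.neg_apply]
          rw [h5, sub_neg_eq_add]
      _ = 0 := h2
  have hcge : cg - e = 0 := τC.left_injective _ _ (op_ne hgg hhh hgh hhg) hz
  have hcg_e : cg = e := sub_eq_zero.mp hcge
  have hch_e : ch = e := by
    have h4 : -(ch - e) = 0 := by rw [← hopp, hcge]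
    exact sub_eq_zero.mp (neg_eq_zero.mp h4)
  rw [hcg_e, hch_e]

/-- polarization step: with `β` positive and dominated by `α ⊗ id`,
for orthogonal nonzero vectors `g ⊥ h` and positive `a ∈ A`, the coefficients
`cg, ch ∈ C` determined by `β(a ⊗ |g⟩⟨g|) = cg ⊗ |g⟩⟨g|` and
`β(a ⊗ |h⟩⟨h|) = ch ⊗ |h⟩⟨h|` coincide. -/
theorem polarization_coefficients_eq {A C H TA TC : Type*}
    [CStarAlgebra A] [PartialOrder A] [StarOrderedRing A]
    [CStarAlgebra C] [PartialOrder C] [StarOrderedRing C]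
    [NormedAddCommGroup H] [InnerProductSpace ℂ H] [CompleteSpace H]
    [CStarAlgebra TA] [PartialOrder TA] [StarOrderedRing TA]
    [CStarAlgebra TC] [PartialOrder TC] [StarOrderedRing TC]
    (τA : CStarTensorProduct A (H →L[ℂ] H) TA)
    (τC : CStarTensorProduct C (H →L[ℂ] H) TC)
    (α : A →ₗ[ℂ] C) (αid : TA →ₗ[ℂ] TC)
    (hαid : ∀ (a : A) (S : H →L[ℂ] H), αid (τA.tmul a S) = τC.tmul (α a) S)
    (β : TA →ₗ[ℂ] TC)
    (hβpos : ∀ x : TA, 0 ≤ x → 0 ≤ β x)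
    (hdom : ∀ x : TA, 0 ≤ x → 0 ≤ αid x - β x)
    (g h : H) (hg : g ≠ 0) (hh : h ≠ 0) (hgh : ⟪g, h⟫_ℂ = 0)
    (a : A) (ha : 0 ≤ a) (cg ch : C)
    (hcg : β (τA.tmul a ((innerSL ℂ g).smulRight g)) = τC.tmul cg ((innerSL ℂ g).smulRight g))
    (hch : β (τA.tmul a ((innerSL ℂ h).smulRight h)) = τC.tmul ch ((innerSL ℂ h).smulRight h)) :
    cg = ch := by
  have hcg' : β (τA.tmul a (rk g)) = τC.tmul cg (rk g) := hcg
  have hch' : β (τA.tmul a (rk h)) = τC.tmul ch (rk h) := hch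
  set rg : ℝ := ‖g‖⁻¹ with hrgdef
  set rh : ℝ := ‖h‖⁻¹ with hrhdef
  set g' : H := (rg : ℂ) • g with hg'def
  set h' : H := (rh : ℂ) • h with hh'def
  have hgnorm : ‖g‖ ≠ 0 := norm_ne_zero_iff.mpr hg
  have hhnorm : ‖h‖ ≠ 0 := norm_ne_zero_iff.mpr hh
  have hg1 : ‖g'‖ = 1 := by
    rw [hg'def, norm_smul, Complex.norm_real, hrgdef, Real.norm_eq_abs,
      abs_of_nonneg (by positivity), inv_mul_cancel₀ hgnorm]
  have hh1 : ‖h'‖ = 1 := by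
    rw [hh'def, norm_smul, Complex.norm_real, hrhdef, Real.norm_eq_abs,
      abs_of_nonneg (by positivity), inv_mul_cancel₀ hhnorm]
  have hgh' : ⟪g', h'⟫_ℂ = 0 := by
    rw [hg'def, hh'def, inner_smul_left, inner_smul_right, hgh, mul_zero, mul_zero]
  have hrkg : rk g' = ((rg : ℂ) ^ 2) • rk g := by rw [hg'def, rk_real_smul]
  have hrkh : rk h' = ((rh : ℂ) ^ 2) • rk h := by rw [hh'def, rk_real_smul]
  have hcg'' : β (τA.tmul a (rk g')) = τC.tmul cg (rk g') := by
    rw [hrkg, map_smul, map_smul, hcg', map_smul]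
  have hch'' : β (τA.tmul a (rk h')) = τC.tmul ch (rk h') := by
    rw [hrkh, map_smul, map_smul, hch', map_smul]
  exact polarization_key τA τC α αid hαid β hβpos hdom g' h' hg1 hh1 hgh' a ha cg ch
    hcg'' hch''
end

section
/- Let A and C be unital C*-algebras and τ : A → C a non-zero positive linear map, and let φ : M_k(ℂ) → M_k(ℂ) be a positive map that is not completely copositive. Then τ ⊗ φ : A ⊗ M_k(ℂ) → C ⊗ M_k(ℂ) is not completely copositive. -/
open scoped ComplexOrder

/-- Positivity of a matrix over a C*-algebra: `0 ≤ Σ_{i,j} xᵢ* ⬝ Mᵢⱼ ⬝ xⱼ`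
for every vector `x` with entries in the algebra. -/
def MatPos {A : Type*} [NonUnitalRing A] [StarRing A] [PartialOrder A]
    {n : Type*} [Fintype n] (M : Matrix n n A) : Prop :=
  ∀ x : n → A, 0 ≤ dotProduct (star x) (M.mulVec x)

/-- The amplification `id_n ⊗ ψ` of a map `ψ : M_k(A) → M_k(C)`, acting blockwise on an
`n × n` block matrix with entries in `A` (indices flattened). -/
def amplPos {A C : Type*} [AddCommMonoid A] [Module ℂ A] [AddCommMonoid C] [Module ℂ C]
    {k : ℕ} (ψ : Matrix (Fin k) (Fin k) A →ₗ[ℂ] Matrix (Fin k) (Fin k) C) (n : ℕ)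
    (M : Matrix (Fin n × Fin k) (Fin n × Fin k) A) :
    Matrix (Fin n × Fin k) (Fin n × Fin k) C :=
  Matrix.of fun p q => ψ (Matrix.of fun s t => M (p.1, s) (q.1, t)) p.2 q.2

/-- The amplification `t_n ⊗ ψ` (transpose on the outer factor): block `(i,j)` of the
output is `ψ` applied to block `(j,i)` of the input. -/
def amplCopos {A C : Type*} [AddCommMonoid A] [Module ℂ A] [AddCommMonoid C] [Module ℂ C]
    {k : ℕ} (ψ : Matrix (Fin k) (Fin k) A →ₗ[ℂ] Matrix (Fin k) (Fin k) C) (n : ℕ)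
    (M : Matrix (Fin n × Fin k) (Fin n × Fin k) A) :
    Matrix (Fin n × Fin k) (Fin n × Fin k) C :=
  Matrix.of fun p q => ψ (Matrix.of fun s t => M (q.1, s) (p.1, t)) p.2 q.2

/-- A map `ψ : M_k(A) → M_k(C)` is completely positive if all amplifications `id_n ⊗ ψ`
preserve matrix positivity. -/
def IsCPBlock {A C : Type*} [NonUnitalRing A] [StarRing A] [PartialOrder A] [Module ℂ A]
    [NonUnitalRing C] [StarRing C] [PartialOrder C] [Module ℂ C] {k : ℕ}
    (ψ : Matrix (Fin k) (Fin k) A →ₗ[ℂ] Matrix (Fin k) (Fin k) C) : Prop :=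
  ∀ (n : ℕ) (M : Matrix (Fin n × Fin k) (Fin n × Fin k) A),
    MatPos M → MatPos (amplPos ψ n M)

/-- A map `ψ : M_k(A) → M_k(C)` is completely copositive if all amplifications
`t_n ⊗ ψ` preserve matrix positivity. -/
def IsCCPBlock {A C : Type*} [NonUnitalRing A] [StarRing A] [PartialOrder A] [Module ℂ A]
    [NonUnitalRing C] [StarRing C] [PartialOrder C] [Module ℂ C] {k : ℕ}
    (ψ : Matrix (Fin k) (Fin k) A →ₗ[ℂ] Matrix (Fin k) (Fin k) C) : Prop :=
  ∀ (n : ℕ) (M : Matrix (Fin n × Fin k) (Fin n × Fin k) A),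
    MatPos M → MatPos (amplCopos ψ n M)

private lemma conj_eq_self_of_nonneg {z : ℂ} (h : 0 ≤ z) : (starRingEnd ℂ) z = z := by
  rw [Complex.conj_eq_iff_im]
  exact ((Complex.le_def.mp h).2).symm

lemma matPos_posSemidef {m : Type*} [Fintype m] [DecidableEq m] {M : Matrix m m ℂ}
    (h : MatPos M) : M.PosSemidef := by
  refine Matrix.PosSemidef.of_dotProduct_mulVec_nonneg ?_ h
  rw [Matrix.isHermitian_iff_isSymmetric, LinearMap.isSymmetric_iff_inner_map_self_real]
  intro v
  obtain ⟨x, rfl⟩ := (WithLp.equiv 2 (m → ℂ)).symm.surjective v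
  have h1 : (inner ℂ ((WithLp.equiv 2 (m → ℂ)).symm x)
      (Matrix.toEuclideanLin M ((WithLp.equiv 2 (m → ℂ)).symm x)) : ℂ)
      = dotProduct (star x) (M.mulVec x) := by
    rw [EuclideanSpace.inner_eq_star_dotProduct]
    exact dotProduct_comm _ _
  have h2 : (starRingEnd ℂ) (inner ℂ (Matrix.toEuclideanLin M ((WithLp.equiv 2 (m → ℂ)).symm x))
      ((WithLp.equiv 2 (m → ℂ)).symm x) : ℂ) = dotProduct (star x) (M.mulVec x) := by
    rw [inner_conj_symm]; exact h1
  have h3 := congrArg (starRingEnd ℂ) h2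
  rw [RingHomCompTriple.comp_apply, conj_eq_self_of_nonneg (h x)] at h3
  rw [h2]
  exact h3.symm

lemma matPos_smul_one {A : Type*} [CStarAlgebra A] [PartialOrder A] [StarOrderedRing A]
    {m : Type*} [Fintype m] [DecidableEq m] {M : Matrix m m ℂ} (h : M.PosSemidef) :
    MatPos (Matrix.of fun p q : m => M p q • (1 : A)) := by
  intro x
  obtain ⟨B, hBM⟩ : ∃ B : Matrix m m ℂ, M = star B * B := by
    open scoped MatrixOrder in exact CStarAlgebra.nonneg_iff_eq_star_mul_self.mp h.nonneg
  have hM : ∀ p q, M p q = ∑ r, (starRingEnd ℂ) (B r p) * B r q := by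
    intro p q
    rw [hBM, Matrix.mul_apply]
    rfl
  have key : dotProduct (star x) ((Matrix.of fun p q : m => M p q • (1 : A)).mulVec x)
      = ∑ r, star (∑ q, B r q • x q) * (∑ q, B r q • x q) :=
    calc dotProduct (star x) ((Matrix.of fun p q : m => M p q • (1 : A)).mulVec x)
        = ∑ p, ∑ q, M p q • (star (x p) * x q) := by
          simp only [dotProduct, Matrix.mulVec, Matrix.of_apply, Pi.star_apply,
            smul_mul_assoc, one_mul, Finset.mul_sum, mul_smul_comm]
      _ = ∑ p, ∑ q, ∑ r, ((starRingEnd ℂ) (B r p) * B r q) • (star (x p) * x q) := by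
          refine Finset.sum_congr rfl fun p _ => Finset.sum_congr rfl fun q _ => ?_
          rw [hM p q, Finset.sum_smul]
      _ = ∑ p, ∑ r, ∑ q, ((starRingEnd ℂ) (B r p) * B r q) • (star (x p) * x q) :=
          Finset.sum_congr rfl fun p _ => Finset.sum_comm
      _ = ∑ r, ∑ p, ∑ q, ((starRingEnd ℂ) (B r p) * B r q) • (star (x p) * x q) :=
          Finset.sum_comm
      _ = ∑ r, star (∑ q, B r q • x q) * (∑ q, B r q • x q) := by
          refine Finset.sum_congr rfl fun r _ => ?_
          rw [star_sum, Finset.sum_mul]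
          refine Finset.sum_congr rfl fun p _ => ?_
          rw [star_smul, Finset.mul_sum]
          refine Finset.sum_congr rfl fun q _ => ?_
          rw [smul_mul_smul_comm, RCLike.star_def]
  rw [key]
  exact Finset.sum_nonneg fun r _ => star_mul_self_nonneg _

lemma tau_one_ne_zero {A C : Type*}
    [CStarAlgebra A] [PartialOrder A] [StarOrderedRing A]
    [CStarAlgebra C] [PartialOrder C] [StarOrderedRing C]
    (τ : A →ₗ[ℂ] C) (hτpos : ∀ a : A, 0 ≤ a → 0 ≤ τ a) (hτne : τ ≠ 0) :
    τ 1 ≠ 0 := by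
  intro h0
  apply hτne
  ext a
  have ha : a ∈ Submodule.span ℂ {x : A | 0 ≤ x} := by
    rw [CStarAlgebra.span_nonneg]; trivial
  simp only [LinearMap.zero_apply]
  induction ha using Submodule.span_induction with
  | mem x hx =>
      have hle : x ≤ algebraMap ℝ A ‖x‖ :=
        IsSelfAdjoint.le_algebraMap_norm_self (IsSelfAdjoint.of_nonneg hx)
      have h1 : (0 : C) ≤ τ (algebraMap ℝ A ‖x‖) - τ x := by
        rw [← map_sub]
        exact hτpos _ (sub_nonneg.mpr hle)
      have h2 : τ (algebraMap ℝ A ‖x‖) = 0 := by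
        rw [IsScalarTower.algebraMap_apply ℝ ℂ A, Algebra.algebraMap_eq_smul_one, map_smul, h0,
          smul_zero]
      rw [h2, zero_sub, le_neg] at h1
      exact le_antisymm (by simpa using h1) (hτpos _ hx)
  | zero => simp
  | add x y _ _ hx hy => rw [map_add, hx, hy, add_zero]
  | smul c x _ hx => rw [map_smul, hx, smul_zero]

/-- Remark 3.3: if `τ : A → C` is a nonzero positive linear map between
unital C*-algebras and `φ : M_k(ℂ) → M_k(ℂ)` is a positive map which is not completely
copositive, then `τ ⊗ φ : A ⊗ M_k(ℂ) → C ⊗ M_k(ℂ)` (the map determined by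
`a ⊗ m ↦ τ a ⊗ φ m`) is not completely copositive. -/
theorem tensor_not_completelyCopositive {A C : Type*}
    [CStarAlgebra A] [PartialOrder A] [StarOrderedRing A]
    [CStarAlgebra C] [PartialOrder C] [StarOrderedRing C]
    (τ : A →ₗ[ℂ] C) (hτpos : ∀ a : A, 0 ≤ a → 0 ≤ τ a) (hτne : τ ≠ 0)
    (k : ℕ) (φ : Matrix (Fin k) (Fin k) ℂ →ₗ[ℂ] Matrix (Fin k) (Fin k) ℂ)
    (hφpos : ∀ m : Matrix (Fin k) (Fin k) ℂ, MatPos m → MatPos (φ m))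
    (hφ : ¬ IsCCPBlock (φ : Matrix (Fin k) (Fin k) ℂ →ₗ[ℂ] Matrix (Fin k) (Fin k) ℂ))
    (ψ : Matrix (Fin k) (Fin k) A →ₗ[ℂ] Matrix (Fin k) (Fin k) C)
    (hψ : ∀ (a : A) (m : Matrix (Fin k) (Fin k) ℂ),
      ψ (Matrix.of fun s t => m s t • a) = Matrix.of fun s t => φ m s t • τ a) :
    ¬ IsCCPBlock ψ := by
  intro hccp
  unfold IsCCPBlock at hφ
  push_neg at hφ
  obtain ⟨n, M, hMpos, hbad⟩ := hφ
  unfold MatPos at hbad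
  push_neg at hbad
  obtain ⟨x, hx⟩ := hbad
  set c := dotProduct (star x) ((amplCopos φ n M).mulVec x) with hc
  have hMA : MatPos (Matrix.of fun p q : Fin n × Fin k => M p q • (1 : A)) :=
    matPos_smul_one (matPos_posSemidef hMpos)
  have hN := hccp n _ hMA
  have hent : ∀ p q, amplCopos ψ n (Matrix.of fun p q : Fin n × Fin k => M p q • (1 : A)) p q
      = amplCopos φ n M p q • τ 1 := by
    intro p q
    show ψ (Matrix.of fun s t =>
      (Matrix.of fun p q : Fin n × Fin k => M p q • (1 : A)) (q.1, s) (p.1, t)) p.2 q.2 = _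
    have heq : (Matrix.of fun s t =>
        (Matrix.of fun p q : Fin n × Fin k => M p q • (1 : A)) (q.1, s) (p.1, t))
        = Matrix.of fun s t => (Matrix.of fun s t => M (q.1, s) (p.1, t)) s t • (1 : A) := rfl
    rw [heq, hψ 1 (Matrix.of fun s t => M (q.1, s) (p.1, t))]
    rfl
  have hyval := hN (fun p => x p • (1 : C))
  have hyc : dotProduct (star fun p => x p • (1 : C))
      ((amplCopos ψ n (Matrix.of fun p q : Fin n × Fin k => M p q • (1 : A))).mulVec
        (fun p => x p • (1 : C))) = c • τ 1 := by
    have hterm : ∀ p q, (star fun p => x p • (1 : C)) p *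
        (amplCopos ψ n (Matrix.of fun p q : Fin n × Fin k => M p q • (1 : A)) p q *
          (x q • (1 : C)))
        = ((starRingEnd ℂ) (x p) * (amplCopos φ n M p q * x q)) • τ 1 := by
      intro p q
      simp only [Pi.star_apply, star_smul, star_one, hent, RCLike.star_def]
      rw [smul_mul_smul_comm, mul_one, smul_mul_smul_comm, one_mul, mul_smul, mul_smul]
    rw [hc]
    trans (∑ p, ∑ q, ((starRingEnd ℂ) (x p) * (amplCopos φ n M p q * x q)) • τ 1)
    · simp only [dotProduct, Matrix.mulVec, Finset.mul_sum]
      exact Finset.sum_congr rfl fun p _ => Finset.sum_congr rfl fun q _ => hterm p q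
    · simp only [dotProduct, Matrix.mulVec, Finset.sum_smul, Finset.mul_sum,
        Pi.star_apply, RCLike.star_def]
  rw [hyc] at hyval
  have hτ1pos : (0 : C) ≤ τ 1 := hτpos 1 (by simpa using star_mul_self_nonneg (1 : A))
  have hτ1ne : τ 1 ≠ 0 := tau_one_ne_zero τ hτpos hτne
  have hsa : star (c • τ 1) = c • τ 1 := (IsSelfAdjoint.of_nonneg hyval)
  rw [star_smul, (IsSelfAdjoint.of_nonneg hτ1pos).star_eq, RCLike.star_def] at hsa
  have hconj : (starRingEnd ℂ) c = c := by
    by_contra hne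
    have h0 : ((starRingEnd ℂ) c - c) • τ 1 = 0 := by rw [sub_smul, hsa, sub_self]
    rcases smul_eq_zero.mp h0 with h | h
    · exact hne (by rwa [sub_eq_zero] at h)
    · exact hτ1ne h
  have him : c.im = 0 := Complex.conj_eq_iff_im.mp hconj
  apply hx
  rw [Complex.le_def]
  refine ⟨?_, by simpa using him.symm⟩
  by_contra hlt
  push_neg at hlt
  simp only [Complex.zero_re] at hlt
  have h5 : (0 : C) ≤ c.re • τ 1 := by
    rw [← Complex.coe_smul, Complex.conj_eq_iff_re.mp hconj]
    exact hyval
  have h6 : (0 : C) ≤ (-c.re) • τ 1 := smul_nonneg (neg_nonneg.mpr hlt.le) hτ1pos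
  rw [neg_smul] at h6
  have h7 : c.re • τ 1 = 0 := le_antisymm (by simpa using neg_nonneg.mp (by simpa using h6)) h5
  rcases smul_eq_zero.mp h7 with h | h
  · exact absurd h hlt.ne
  · exact hτ1ne h
end

section
/- Let A and C be unital C*-algebras and τ : A → C a linear map. If for some k ≥ 2 the map τ ⊗ id_k : A ⊗ M_k(ℂ) → C ⊗ M_k(ℂ) is decomposable (i.e., equals the sum of a completely positive map and a completely copositive map), then τ is completely positive. -/
/-- A linear map `τ : A → C` between C*-algebras is completely positive if all matrix
amplifications `[aᵢⱼ] ↦ [τ aᵢⱼ]` preserve matrix positivity. -/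
def IsCompletelyPositive {A C : Type*} [NonUnitalRing A] [StarRing A] [PartialOrder A]
    [Module ℂ A] [NonUnitalRing C] [StarRing C] [PartialOrder C] [Module ℂ C]
    (τ : A →ₗ[ℂ] C) : Prop :=
  ∀ (n : ℕ) (M : Matrix (Fin n) (Fin n) A), MatPos M → MatPos (M.map τ)



set_option linter.unusedSectionVars false
set_option maxHeartbeats 1000000

section Forms
variable {R : Type*} [NonUnitalRing R] [StarRing R]
variable {ι : Type*} [Fintype ι]

def blForm (N : Matrix ι ι R) (a b : ι → R) : R :=
  ∑ u, ∑ v, star (a u) * N u v * b v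


lemma blForm_sum_sum {σ : Type*} [Fintype σ] (N : Matrix ι ι R) (c d : σ → ι → R) :
    blForm N (fun u => ∑ s, c s u) (fun u => ∑ s, d s u)
      = ∑ s, ∑ s', blForm N (c s) (d s') := by
  unfold blForm
  have h : ∀ u v : ι, star (∑ s, c s u) * N u v * (∑ s', d s' v)
      = ∑ s, ∑ s', star (c s u) * N u v * d s' v := by
    intro u v
    rw [star_sum, Finset.sum_mul, Finset.sum_mul]
    refine Finset.sum_congr rfl fun s _ => ?_
    rw [Finset.mul_sum]
  simp only [h]
  calc ∑ u, ∑ v, ∑ s, ∑ s', star (c s u) * N u v * d s' v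
      = ∑ u, ∑ s, ∑ v, ∑ s', star (c s u) * N u v * d s' v :=
        Finset.sum_congr rfl fun u _ => Finset.sum_comm
    _ = ∑ s, ∑ u, ∑ v, ∑ s', star (c s u) * N u v * d s' v := Finset.sum_comm
    _ = ∑ s, ∑ u, ∑ s', ∑ v, star (c s u) * N u v * d s' v :=
        Finset.sum_congr rfl fun s _ => Finset.sum_congr rfl fun u _ => Finset.sum_comm
    _ = ∑ s, ∑ s', ∑ u, ∑ v, star (c s u) * N u v * d s' v :=
        Finset.sum_congr rfl fun s _ => Finset.sum_comm

variable [DecidableEq ι]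

def sdMat (M : Matrix ι ι R) : Matrix ι ι R :=
  fun u v => if u = v then ∑ j, M j j else 0

lemma blForm_single (N : Matrix ι ι R) (u v : ι) (p q : R) :
    blForm N (fun a => if a = u then p else 0) (fun b => if b = v then q else 0)
      = star p * N u v * q := by
  unfold blForm
  have h1 : ∀ a b, star (if a = u then p else 0) * N a b * (if b = v then q else 0)
      = if b = v then (if a = u then star p * N a b * q else 0) else 0 := by
    intro a b
    split_ifs <;> simp
  simp only [h1]
  simp [Finset.sum_ite_eq']

lemma blForm_sd (M : Matrix ι ι R) (a b : ι → R) :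
    blForm (sdMat M) a b = ∑ u, star (a u) * (∑ j, M j j) * b u := by
  unfold blForm sdMat
  refine Finset.sum_congr rfl fun u _ => ?_
  have h1 : ∀ v, star (a u) * (if u = v then ∑ j, M j j else 0) * b v
      = if v = u then star (a u) * (∑ j, M j j) * b u else 0 := by
    intro v
    by_cases h : u = v
    · subst h; simp
    · rw [if_neg h, if_neg (Ne.symm h), mul_zero, zero_mul]
  simp only [h1]
  simp [Finset.sum_ite_eq']
end Forms

section Ineq
variable {R : Type*} [Ring R] [StarRing R] [PartialOrder R] [StarOrderedRing R]
  [Module ℂ R] [StarModule ℂ R] [IsScalarTower ℂ R R] [SMulCommClass ℂ R R]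
variable {ι : Type*} [Fintype ι] [DecidableEq ι]
variable {M : Matrix ι ι R} (hM : ∀ x : ι → R, 0 ≤ blForm M x x)

-- copies of earlier lemmas assumed present; re-proved here for the test compile
lemma blForm_sub_left' (N : Matrix ι ι R) (a a' b : ι → R) :
    blForm N (a - a') b = blForm N a b - blForm N a' b := by
  unfold blForm
  rw [← Finset.sum_sub_distrib]
  refine Finset.sum_congr rfl fun u _ => ?_
  rw [← Finset.sum_sub_distrib]
  exact Finset.sum_congr rfl fun v _ => by simp [sub_mul]

lemma blForm_sub_right' (N : Matrix ι ι R) (a b b' : ι → R) :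
    blForm N a (b - b') = blForm N a b - blForm N a b' := by
  unfold blForm
  rw [← Finset.sum_sub_distrib]
  refine Finset.sum_congr rfl fun u _ => ?_
  rw [← Finset.sum_sub_distrib]
  exact Finset.sum_congr rfl fun v _ => by simp [mul_sub]

lemma blForm_add_left' (N : Matrix ι ι R) (a a' b : ι → R) :
    blForm N (a + a') b = blForm N a b + blForm N a' b := by
  unfold blForm
  rw [← Finset.sum_add_distrib]
  refine Finset.sum_congr rfl fun u _ => ?_
  rw [← Finset.sum_add_distrib]
  exact Finset.sum_congr rfl fun v _ => by simp [add_mul]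

lemma blForm_add_right' (N : Matrix ι ι R) (a b b' : ι → R) :
    blForm N a (b + b') = blForm N a b + blForm N a b' := by
  unfold blForm
  rw [← Finset.sum_add_distrib]
  refine Finset.sum_congr rfl fun u _ => ?_
  rw [← Finset.sum_add_distrib]
  exact Finset.sum_congr rfl fun v _ => by simp [mul_add]

include hM

lemma diag_nonneg (j : ι) : 0 ≤ M j j := by
  have := hM (fun a => if a = j then 1 else 0)
  rwa [blForm_single M j j 1 1, star_one, one_mul, mul_one] at this

lemma sum_diag_nonneg : 0 ≤ ∑ j, M j j :=
  Finset.sum_nonneg fun j _ => diag_nonneg hM j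

lemma sd_nonneg (a b : ι → R) (hab : a = b) : 0 ≤ blForm (sdMat M) a b := by
  subst hab
  rw [blForm_sd]
  exact Finset.sum_nonneg fun u _ => star_left_conjugate_nonneg (sum_diag_nonneg hM) _

end Ineq

section Ineq2
variable {R : Type*} [Ring R] [StarRing R] [PartialOrder R] [StarOrderedRing R]
  [Module ℂ R] [StarModule ℂ R] [IsScalarTower ℂ R R] [SMulCommClass ℂ R R]
variable {ι : Type*} [Fintype ι] [DecidableEq ι]

/-- point-mass vector -/
def efun (u : ι) (p : R) : ι → R := fun a => if a = u then p else 0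

lemma blForm_two (N : Matrix ι ι R) (u v : ι) (p q : R) :
    blForm N (efun u p + efun v q) (efun u p + efun v q)
      = star p * N u u * p + star p * N u v * q + star q * N v u * p
        + star q * N v v * q := by
  rw [blForm_add_left', blForm_add_right', blForm_add_right']
  unfold efun
  rw [blForm_single, blForm_single, blForm_single, blForm_single]
  abel

-- order lemmas from aux1 (restated here for the test file)
lemma aux_smul_nonneg' {r : ℝ} (hr : 0 ≤ r) {x : R} (hx : 0 ≤ x) : 0 ≤ (r : ℂ) • x := by
  rw [StarOrderedRing.nonneg_iff] at hx ⊢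
  induction hx using AddSubmonoid.closure_induction with
  | mem y hy =>
    obtain ⟨s, rfl⟩ := hy
    have : (r : ℂ) • (star s * s)
        = star (((Real.sqrt r : ℝ) : ℂ) • s) * (((Real.sqrt r : ℝ) : ℂ) • s) := by
      rw [star_smul, smul_mul_smul_comm]
      rw [Complex.star_def, Complex.conj_ofReal, ← Complex.ofReal_mul,
        Real.mul_self_sqrt hr]
    rw [this]
    exact AddSubmonoid.subset_closure ⟨_, rfl⟩
  | zero => simpa using (AddSubmonoid.closure _).zero_mem
  | add a b _ _ ha hb => rw [smul_add]; exact (AddSubmonoid.closure _).add_mem ha hb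

lemma aux_unsmul_nat' {c : ℕ} (hc : 0 < c) {x : R} (h : 0 ≤ c • x) : 0 ≤ x := by
  have h' : 0 ≤ ((c : ℝ) : ℂ) • x := by
    rw [show ((c:ℝ):ℂ) = (c:ℂ) by push_cast; ring, Nat.cast_smul_eq_nsmul]; exact h
  have h2 := aux_smul_nonneg' (r := (c:ℝ)⁻¹) (by positivity) h'
  rwa [smul_smul, ← Complex.ofReal_mul, inv_mul_cancel₀ (by exact_mod_cast hc.ne'),
    Complex.ofReal_one, one_smul] at h2

lemma sum_sum_diag_eq (f : ι → R) :
    ∑ _u : ι, ∑ _v : ι, (0:R) + 0 = 0 := by simp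

lemma e_const_left (c : ι → R) :
    ∑ u : ι, ∑ _v : ι, c u = (Fintype.card ι) • ∑ u, c u := by
  simp only [Finset.sum_const, Finset.card_univ]
  rw [← Finset.smul_sum]

lemma e_const_right (c : ι → R) :
    ∑ _u : ι, ∑ v : ι, c v = (Fintype.card ι) • ∑ v, c v := by
  rw [Finset.sum_comm]; exact e_const_left c

variable {M : Matrix ι ι R} (hM : ∀ x : ι → R, 0 ≤ blForm M x x)
include hM

lemma key_m_le (y : ι → R) :
    blForm M y y ≤ (Fintype.card ι) • blForm (sdMat M) y y := by
  set n := Fintype.card ι with hn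
  set D : R := ∑ u, star (y u) * M u u * y u with hD
  have step1 : blForm M y y ≤ n • D := by
    have key : (0:R) ≤ ∑ u, ∑ v, blForm M (efun u (y u) + efun v (-(y v)))
        (efun u (y u) + efun v (-(y v))) :=
      Finset.sum_nonneg fun u _ => Finset.sum_nonneg fun v _ => hM _
    have hw : ∀ u v : ι, blForm M (efun u (y u) + efun v (-(y v)))
        (efun u (y u) + efun v (-(y v)))
        = (star (y u) * M u u * y u + star (y v) * M v v * y v)
          - (star (y u) * M u v * y v + star (y v) * M v u * y u) := by
      intro u v
      rw [blForm_two]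
      simp only [star_neg, mul_neg, neg_mul]
      abel
    have hsum : ∑ u, ∑ v, blForm M (efun u (y u) + efun v (-(y v)))
        (efun u (y u) + efun v (-(y v)))
        = 2 • (n • D - blForm M y y) := by
      simp only [hw]
      rw [Finset.sum_congr rfl (fun u _ => Finset.sum_sub_distrib _ _),
        Finset.sum_sub_distrib,
        Finset.sum_congr rfl (fun u _ => Finset.sum_add_distrib),
        Finset.sum_add_distrib,
        Finset.sum_congr rfl (fun u _ => Finset.sum_add_distrib),
        Finset.sum_add_distrib]
      have e1 : ∑ u : ι, ∑ _v : ι, star (y u) * M u u * y u = n • D := by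
        rw [hn, hD]; exact e_const_left _
      have e2 : ∑ _u : ι, ∑ v : ι, star (y v) * M v v * y v = n • D := by
        rw [hn, hD]; exact e_const_right _
      have e3 : ∑ u : ι, ∑ v : ι, star (y u) * M u v * y v = blForm M y y := rfl
      have e4 : ∑ u : ι, ∑ v : ι, star (y v) * M v u * y u = blForm M y y := by
        rw [Finset.sum_comm]; rfl
      rw [e1, e2, e3, e4]
      rw [smul_sub]
      abel
    rw [hsum] at key
    have := aux_unsmul_nat' (by norm_num) key
    exact sub_nonneg.mp this
  have step2 : D ≤ blForm (sdMat M) y y := by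
    rw [blForm_sd]
    have expand : ∀ u, star (y u) * (∑ j, M j j) * y u
        = star (y u) * M u u * y u + ∑ j ∈ Finset.univ.erase u, star (y u) * M j j * y u := by
      intro u
      rw [Finset.mul_sum, Finset.sum_mul,
        ← Finset.add_sum_erase Finset.univ _ (Finset.mem_univ u)]
    simp only [expand]
    rw [Finset.sum_add_distrib]
    refine le_add_of_nonneg_right ?_
    exact Finset.sum_nonneg fun u _ => Finset.sum_nonneg fun j hj =>
      star_left_conjugate_nonneg (diag_nonneg hM j) _
  calc blForm M y y ≤ n • D := step1
    _ ≤ n • blForm (sdMat M) y y := by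
        have h0 : (0:R) ≤ n • (blForm (sdMat M) y y - D) :=
          nsmul_nonneg (sub_nonneg.mpr step2) n
        rw [smul_sub] at h0
        exact sub_nonneg.mp h0

lemma key_mt_le (y : ι → R) :
    blForm (Matrix.transpose M) y y ≤ blForm (sdMat M) y y := by
  have key : (0:R) ≤ ∑ u, ∑ v, blForm M (efun v (y u) + efun u (-(y v)))
      (efun v (y u) + efun u (-(y v))) :=
    Finset.sum_nonneg fun u _ => Finset.sum_nonneg fun v _ => hM _
  have hw : ∀ u v : ι, blForm M (efun v (y u) + efun u (-(y v)))
      (efun v (y u) + efun u (-(y v)))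
      = (star (y u) * M v v * y u + star (y v) * M u u * y v)
        - (star (y u) * M v u * y v + star (y v) * M u v * y u) := by
    intro u v
    rw [blForm_two]
    simp only [star_neg, mul_neg, neg_mul]
    abel
  have hsum : ∑ u, ∑ v, blForm M (efun v (y u) + efun u (-(y v)))
      (efun v (y u) + efun u (-(y v)))
      = 2 • (blForm (sdMat M) y y - blForm (Matrix.transpose M) y y) := by
    simp only [hw]
    rw [Finset.sum_congr rfl (fun u _ => Finset.sum_sub_distrib _ _),
      Finset.sum_sub_distrib,
      Finset.sum_congr rfl (fun u _ => Finset.sum_add_distrib),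
      Finset.sum_add_distrib,
      Finset.sum_congr rfl (fun u _ => Finset.sum_add_distrib),
      Finset.sum_add_distrib]
    have e1 : ∑ u : ι, ∑ v : ι, star (y u) * M v v * y u = blForm (sdMat M) y y := by
      rw [blForm_sd]
      refine Finset.sum_congr rfl fun u _ => ?_
      rw [Finset.mul_sum, Finset.sum_mul]
    have e2 : ∑ u : ι, ∑ v : ι, star (y v) * M u u * y v = blForm (sdMat M) y y := by
      rw [Finset.sum_comm]; exact e1
    have e3 : ∑ u : ι, ∑ v : ι, star (y u) * M v u * y v = blForm (Matrix.transpose M) y y := by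
      unfold blForm; simp [Matrix.transpose_apply]
    have e4 : ∑ u : ι, ∑ v : ι, star (y v) * M u v * y u = blForm (Matrix.transpose M) y y := by
      rw [Finset.sum_comm]; exact e3
    rw [e1, e2, e3, e4, smul_sub]
    abel
  rw [hsum] at key
  exact sub_nonneg.mp (aux_unsmul_nat' (by norm_num) key)

lemma key_mt_ge (y : ι → R) :
    (0:R) ≤ blForm (sdMat M) y y + blForm (Matrix.transpose M) y y := by
  have key : (0:R) ≤ ∑ u, ∑ v, blForm M (efun v (y u) + efun u (y v))
      (efun v (y u) + efun u (y v)) :=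
    Finset.sum_nonneg fun u _ => Finset.sum_nonneg fun v _ => hM _
  have hw : ∀ u v : ι, blForm M (efun v (y u) + efun u (y v))
      (efun v (y u) + efun u (y v))
      = (star (y u) * M v v * y u + star (y v) * M u u * y v)
        + (star (y u) * M v u * y v + star (y v) * M u v * y u) := by
    intro u v
    rw [blForm_two]
    abel
  have hsum : ∑ u, ∑ v, blForm M (efun v (y u) + efun u (y v))
      (efun v (y u) + efun u (y v))
      = 2 • (blForm (sdMat M) y y + blForm (Matrix.transpose M) y y) := by
    simp only [hw]
    rw [Finset.sum_congr rfl (fun u _ => Finset.sum_add_distrib),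
      Finset.sum_add_distrib,
      Finset.sum_congr rfl (fun u _ => Finset.sum_add_distrib),
      Finset.sum_add_distrib,
      Finset.sum_congr rfl (fun u _ => Finset.sum_add_distrib),
      Finset.sum_add_distrib]
    have e1 : ∑ u : ι, ∑ v : ι, star (y u) * M v v * y u = blForm (sdMat M) y y := by
      rw [blForm_sd]
      refine Finset.sum_congr rfl fun u _ => ?_
      rw [Finset.mul_sum, Finset.sum_mul]
    have e2 : ∑ u : ι, ∑ v : ι, star (y v) * M u u * y v = blForm (sdMat M) y y := by
      rw [Finset.sum_comm]; exact e1
    have e3 : ∑ u : ι, ∑ v : ι, star (y u) * M v u * y v = blForm (Matrix.transpose M) y y := by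
      unfold blForm; simp [Matrix.transpose_apply]
    have e4 : ∑ u : ι, ∑ v : ι, star (y v) * M u v * y u = blForm (Matrix.transpose M) y y := by
      rw [Finset.sum_comm]; exact e3
    rw [e1, e2, e3, e4]
    abel
  rw [hsum] at key
  exact aux_unsmul_nat' (by norm_num) key

end Ineq2

section Reindex
variable {R : Type*} [NonUnitalRing R] [StarRing R] [PartialOrder R]
variable {ι κ : Type*} [Fintype ι] [Fintype κ] [DecidableEq κ]

lemma blForm_submatrix (N : Matrix κ κ R) (f : ι → κ) (x : ι → R) :
    blForm (N.submatrix f f) x x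
      = blForm N (fun a => ∑ i ∈ Finset.univ.filter (fun i => f i = a), x i)
          (fun a => ∑ i ∈ Finset.univ.filter (fun i => f i = a), x i) := by
  unfold blForm
  symm
  calc ∑ a, ∑ b, star (∑ i ∈ Finset.univ.filter (fun i => f i = a), x i) * N a b
        * (∑ j ∈ Finset.univ.filter (fun j => f j = b), x j)
      = ∑ a, ∑ i ∈ Finset.univ.filter (fun i => f i = a),
          ∑ b, ∑ j ∈ Finset.univ.filter (fun j => f j = b),
            star (x i) * N (f i) (f j) * x j := by
        refine Finset.sum_congr rfl fun a _ => ?_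
        rw [star_sum]
        have h1 : ∀ b, (∑ i ∈ Finset.univ.filter (fun i => f i = a), star (x i)) * N a b
            * (∑ j ∈ Finset.univ.filter (fun j => f j = b), x j)
            = ∑ i ∈ Finset.univ.filter (fun i => f i = a),
                ∑ j ∈ Finset.univ.filter (fun j => f j = b), star (x i) * N a b * x j := by
          intro b
          rw [Finset.sum_mul, Finset.sum_mul]
          exact Finset.sum_congr rfl fun i _ => by rw [Finset.mul_sum]
        simp only [h1]
        rw [Finset.sum_comm]
        refine Finset.sum_congr rfl fun i hi => Finset.sum_congr rfl fun b _ => ?_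
        refine Finset.sum_congr rfl fun j hj => ?_
        rw [(Finset.mem_filter.mp hi).2, (Finset.mem_filter.mp hj).2]
    _ = ∑ i, ∑ b, ∑ j ∈ Finset.univ.filter (fun j => f j = b),
            star (x i) * N (f i) (f j) * x j := by
        exact Finset.sum_fiberwise_of_maps_to (fun i _ => Finset.mem_univ (f i)) _
    _ = ∑ i, ∑ j, star (x i) * N (f i) (f j) * x j := by
        refine Finset.sum_congr rfl fun i _ => ?_
        exact Finset.sum_fiberwise_of_maps_to (fun j _ => Finset.mem_univ (f j)) _
    _ = ∑ i, ∑ j, star (x i) * (N.submatrix f f) i j * x j := rfl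
end Reindex

section Core
variable {A : Type*} [Ring A] [StarRing A] [PartialOrder A] [StarOrderedRing A]
  [Module ℂ A] [StarModule ℂ A] [IsScalarTower ℂ A A] [SMulCommClass ℂ A A]
variable {n k : ℕ} (hk : 2 ≤ k) (MM : Matrix (Fin n) (Fin n) A)

/-- flag embedding -/
def emb (hk : 2 ≤ k) : Fin 2 → Fin k := Fin.castLE hk

lemma emb_inj : Function.Injective (emb (k := k) hk) := Fin.castLE_injective hk

/-- the diagonal ("A") part of the PPT certificate matrix -/
def QAmat : Matrix ((Fin n × Fin 2) × Fin k) ((Fin n × Fin 2) × Fin k) A :=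
  fun a b => if a.1.2 = b.1.2 ∧ a.2 = b.2 then
    (2*n) • sdMat MM a.1.1 b.1.1 - 2 • MM a.1.1 b.1.1 else 0

/-- the entangled ("B") part of the PPT certificate matrix -/
def QBmat : Matrix ((Fin n × Fin 2) × Fin k) ((Fin n × Fin 2) × Fin k) A :=
  fun a b => if a.2 = emb hk a.1.2 ∧ b.2 = emb hk b.1.2 then
    (n+2) • MM a.1.1 b.1.1 - n • sdMat MM a.1.1 b.1.1 else 0

lemma qa_form (x : (Fin n × Fin 2) × Fin k → A) :
    blForm (QAmat MM) x x
      = ∑ s : Fin 2, ∑ t : Fin k,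
          ((2*n) • blForm (sdMat MM) (fun u => x ((u,s),t)) (fun u => x ((u,s),t))
            - 2 • blForm MM (fun u => x ((u,s),t)) (fun u => x ((u,s),t))) := by
  unfold blForm QAmat
  simp only [Fintype.sum_prod_type]
  have step1 : ∀ (u : Fin n) (s : Fin 2) (t : Fin k),
      ∑ v : Fin n, ∑ s' : Fin 2, ∑ t' : Fin k,
        star (x ((u,s),t)) * (if s = s' ∧ t = t' then
          (2*n) • sdMat MM u v - 2 • MM u v else 0) * x ((v,s'),t')
      = ∑ v : Fin n, ((2*n) • (star (x ((u,s),t)) * sdMat MM u v * x ((v,s),t))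
          - 2 • (star (x ((u,s),t)) * MM u v * x ((v,s),t))) := by
    intro u s t
    refine Finset.sum_congr rfl fun v _ => ?_
    have inner : ∀ (s' : Fin 2) (t' : Fin k),
        star (x ((u,s),t)) * (if s = s' ∧ t = t' then
          (2*n) • sdMat MM u v - 2 • MM u v else 0) * x ((v,s'),t')
        = if s = s' then (if t = t' then
            ((2*n) • (star (x ((u,s),t)) * sdMat MM u v * x ((v,s'),t'))
             - 2 • (star (x ((u,s),t)) * MM u v * x ((v,s'),t'))) else 0) else 0 := by
      intro s' t'
      rw [ite_and]
      split_ifs with h1 h2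
      · rw [mul_sub, sub_mul, mul_smul_comm, mul_smul_comm, smul_mul_assoc,
          smul_mul_assoc]
      · simp
      · simp
    simp only [inner]
    simp only [Finset.sum_ite_irrel, Finset.sum_const_zero, Finset.sum_ite_eq,
      Finset.mem_univ, if_true]
  simp only [step1]
  calc ∑ u : Fin n, ∑ s : Fin 2, ∑ t : Fin k, ∑ v : Fin n,
        ((2*n) • (star (x ((u,s),t)) * sdMat MM u v * x ((v,s),t))
          - 2 • (star (x ((u,s),t)) * MM u v * x ((v,s),t)))
      = ∑ s : Fin 2, ∑ t : Fin k, ∑ u : Fin n, ∑ v : Fin n,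
        ((2*n) • (star (x ((u,s),t)) * sdMat MM u v * x ((v,s),t))
          - 2 • (star (x ((u,s),t)) * MM u v * x ((v,s),t))) := by
        rw [Finset.sum_comm]
        exact Finset.sum_congr rfl fun s _ => Finset.sum_comm
    _ = _ := by
        refine Finset.sum_congr rfl fun s _ => Finset.sum_congr rfl fun t _ => ?_
        rw [Finset.sum_congr rfl (fun u (_ : u ∈ Finset.univ) => Finset.sum_sub_distrib _ _),
          Finset.sum_sub_distrib]
        congr 1
        · rw [Finset.smul_sum]
          exact Finset.sum_congr rfl fun u _ => (Finset.smul_sum).symm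
        · rw [Finset.smul_sum]
          exact Finset.sum_congr rfl fun u _ => (Finset.smul_sum).symm
end Core

section Core2
variable {A : Type*} [Ring A] [StarRing A] [PartialOrder A] [StarOrderedRing A]
  [Module ℂ A] [StarModule ℂ A] [IsScalarTower ℂ A A] [SMulCommClass ℂ A A]
variable {n k : ℕ} (hk : 2 ≤ k) (MM : Matrix (Fin n) (Fin n) A)

lemma qb_form (x : (Fin n × Fin 2) × Fin k → A) :
    blForm (QBmat hk MM) x x
      = (n+2) • blForm MM (fun u => ∑ s : Fin 2, x ((u,s), emb hk s))
            (fun u => ∑ s : Fin 2, x ((u,s), emb hk s))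
        - n • blForm (sdMat MM) (fun u => ∑ s : Fin 2, x ((u,s), emb hk s))
            (fun u => ∑ s : Fin 2, x ((u,s), emb hk s)) := by
  have main : blForm (QBmat hk MM) x x
      = ∑ s : Fin 2, ∑ s' : Fin 2, ∑ u : Fin n, ∑ v : Fin n,
          ((n+2) • (star (x ((u,s), emb hk s)) * MM u v * x ((v,s'), emb hk s'))
            - n • (star (x ((u,s), emb hk s)) * sdMat MM u v * x ((v,s'), emb hk s'))) := by
    unfold blForm QBmat
    simp only [Fintype.sum_prod_type]
    have inner : ∀ (u v : Fin n) (s s' : Fin 2) (t : Fin k) (t' : Fin k),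
        star (x ((u,s),t)) * (if t = emb hk s ∧ t' = emb hk s' then
          (n+2) • MM u v - n • sdMat MM u v else 0) * x ((v,s'),t')
        = if t = emb hk s then (if t' = emb hk s' then
            ((n+2) • (star (x ((u,s),t)) * MM u v * x ((v,s'),t'))
              - n • (star (x ((u,s),t)) * sdMat MM u v * x ((v,s'),t'))) else 0) else 0 := by
      intro u v s s' t t'
      rw [ite_and]
      split_ifs with h1 h2
      · rw [mul_sub, sub_mul, mul_smul_comm, mul_smul_comm, smul_mul_assoc,
          smul_mul_assoc]
      · simp
      · simp
    simp only [inner]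
    simp only [Finset.sum_ite_irrel, Finset.sum_const_zero, Finset.sum_ite_eq',
      Finset.mem_univ, if_true]
    calc ∑ u : Fin n, ∑ s : Fin 2, ∑ v : Fin n, ∑ s' : Fin 2,
          ((n+2) • (star (x ((u,s), emb hk s)) * MM u v * x ((v,s'), emb hk s'))
            - n • (star (x ((u,s), emb hk s)) * sdMat MM u v * x ((v,s'), emb hk s')))
        = ∑ s : Fin 2, ∑ u : Fin n, ∑ v : Fin n, ∑ s' : Fin 2,
          ((n+2) • (star (x ((u,s), emb hk s)) * MM u v * x ((v,s'), emb hk s'))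
            - n • (star (x ((u,s), emb hk s)) * sdMat MM u v * x ((v,s'), emb hk s'))) :=
          Finset.sum_comm
      _ = ∑ s : Fin 2, ∑ u : Fin n, ∑ s' : Fin 2, ∑ v : Fin n,
          ((n+2) • (star (x ((u,s), emb hk s)) * MM u v * x ((v,s'), emb hk s'))
            - n • (star (x ((u,s), emb hk s)) * sdMat MM u v * x ((v,s'), emb hk s'))) :=
          Finset.sum_congr rfl fun s _ => Finset.sum_congr rfl fun u _ => Finset.sum_comm
      _ = ∑ s : Fin 2, ∑ s' : Fin 2, ∑ u : Fin n, ∑ v : Fin n,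
          ((n+2) • (star (x ((u,s), emb hk s)) * MM u v * x ((v,s'), emb hk s'))
            - n • (star (x ((u,s), emb hk s)) * sdMat MM u v * x ((v,s'), emb hk s'))) :=
          Finset.sum_congr rfl fun s _ => Finset.sum_comm
  rw [main]
  rw [blForm_sum_sum MM (fun s => fun u => x ((u,s), emb hk s))
    (fun s => fun u => x ((u,s), emb hk s))]
  rw [blForm_sum_sum (sdMat MM) (fun s => fun u => x ((u,s), emb hk s))
    (fun s => fun u => x ((u,s), emb hk s))]
  rw [Finset.smul_sum, Finset.smul_sum]
  rw [Finset.sum_congr rfl (fun s (_ : s ∈ Finset.univ) => Finset.smul_sum),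
    Finset.sum_congr rfl (fun s (_ : s ∈ Finset.univ) => Finset.smul_sum),
    ← Finset.sum_sub_distrib]
  refine Finset.sum_congr rfl fun s _ => ?_
  rw [← Finset.sum_sub_distrib]
  refine Finset.sum_congr rfl fun s' _ => ?_
  unfold blForm
  rw [Finset.smul_sum, Finset.smul_sum]
  rw [← Finset.sum_sub_distrib]
  refine Finset.sum_congr rfl fun u _ => ?_
  rw [Finset.smul_sum, Finset.smul_sum, ← Finset.sum_sub_distrib]
end Core2

section Core3
variable {A : Type*} [Ring A] [StarRing A] [PartialOrder A] [StarOrderedRing A]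
  [Module ℂ A] [StarModule ℂ A] [IsScalarTower ℂ A A] [SMulCommClass ℂ A A]
variable {n k : ℕ} (hk : 2 ≤ k) {MM : Matrix (Fin n) (Fin n) A}

lemma blForm_add_matrix' {ι : Type*} [Fintype ι] (N₁ N₂ : Matrix ι ι A) (a b : ι → A) :
    blForm (N₁ + N₂) a b = blForm N₁ a b + blForm N₂ a b := by
  unfold blForm
  rw [← Finset.sum_add_distrib]
  refine Finset.sum_congr rfl fun u _ => ?_
  rw [← Finset.sum_add_distrib]
  refine Finset.sum_congr rfl fun v _ => ?_
  simp [Matrix.add_apply, mul_add, add_mul]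

lemma two_smul_F (X Y : A) : (2*n) • X - 2 • Y = 2 • (n • X - Y) := by
  rw [smul_sub, mul_smul]

variable (hMM : ∀ x : Fin n → A, 0 ≤ blForm MM x x)
include hMM

lemma F_nonneg (w : Fin n → A) : 0 ≤ n • blForm (sdMat MM) w w - blForm MM w w := by
  rw [sub_nonneg]
  have := key_m_le hMM w
  rwa [Fintype.card_fin] at this

theorem q_pos (x : (Fin n × Fin 2) × Fin k → A) :
    0 ≤ blForm (QAmat MM + QBmat hk MM) x x := by
  classical
  rw [blForm_add_matrix', qa_form, qb_form]
  set c : Fin 2 × Fin k → Fin n → A := fun p => fun u => x ((u, p.1), p.2) with hc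
  set p : Fin n → A := c (0, emb hk 0)
  set q : Fin n → A := c (1, emb hk 1)
  set y : Fin n → A := fun u => ∑ s : Fin 2, x ((u,s), emb hk s) with hy
  have hypq : y = fun u => p u + q u := by
    funext u; rw [hy]; exact Fin.sum_univ_two _
  have hsum2 : (∑ pr : Fin 2 × Fin k,
          (2:ℕ) • (n • blForm (sdMat MM) (c pr) (c pr) - blForm MM (c pr) (c pr)))
      = ∑ s : Fin 2, ∑ t : Fin k,
      ((2*n) • blForm (sdMat MM) (fun u => x ((u,s),t)) (fun u => x ((u,s),t))
        - 2 • blForm MM (fun u => x ((u,s),t)) (fun u => x ((u,s),t))) := by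
    rw [Fintype.sum_prod_type]
    exact Finset.sum_congr rfl fun s _ => Finset.sum_congr rfl fun t _ =>
      (two_smul_F _ _).symm
  rw [← hsum2]
  have hsub : ({(((0:Fin 2), emb hk 0)), ((1:Fin 2), emb hk 1)} : Finset (Fin 2 × Fin k))
      ⊆ Finset.univ := Finset.subset_univ _
  have hge : ∑ pr ∈ ({(((0:Fin 2), emb hk 0)), ((1:Fin 2), emb hk 1)} : Finset (Fin 2 × Fin k)),
        (2:ℕ) • (n • blForm (sdMat MM) (c pr) (c pr) - blForm MM (c pr) (c pr))
      ≤ ∑ pr : Fin 2 × Fin k,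
        (2:ℕ) • (n • blForm (sdMat MM) (c pr) (c pr) - blForm MM (c pr) (c pr)) := by
    refine Finset.sum_le_sum_of_subset_of_nonneg hsub fun pr _ _ => ?_
    exact nsmul_nonneg (F_nonneg hMM (c pr)) 2
  have hne : (((0:Fin 2), emb hk 0)) ≠ ((1:Fin 2), emb hk 1) := by
    intro h
    exact (by decide : ¬ ((0:Fin 2) = (1:Fin 2))) (congrArg Prod.fst h)
  have hpair : ∑ pr ∈ ({(((0:Fin 2), emb hk 0)), ((1:Fin 2), emb hk 1)} :
        Finset (Fin 2 × Fin k)),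
        (2:ℕ) • (n • blForm (sdMat MM) (c pr) (c pr) - blForm MM (c pr) (c pr))
      = 2 • (n • blForm (sdMat MM) p p - blForm MM p p)
        + 2 • (n • blForm (sdMat MM) q q - blForm MM q q) := by
    rw [Finset.sum_insert (by simp [hne]), Finset.sum_singleton]
  -- key algebraic identity
  have hkey : 2 • (n • blForm (sdMat MM) p p - blForm MM p p)
        + 2 • (n • blForm (sdMat MM) q q - blForm MM q q)
        + ((n+2) • blForm MM y y - n • blForm (sdMat MM) y y)
      = (n • blForm (sdMat MM) (fun u => p u - q u) (fun u => p u - q u)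
          - blForm MM (fun u => p u - q u) (fun u => p u - q u))
        + (n+1) • blForm MM y y := by
    have e1 : blForm MM y y = blForm MM p p + blForm MM p q + blForm MM q p
        + blForm MM q q := by
      rw [hypq]
      rw [show (fun u => p u + q u) = p + q from rfl]
      rw [blForm_add_left', blForm_add_right', blForm_add_right']
      abel
    have e2 : blForm (sdMat MM) y y = blForm (sdMat MM) p p + blForm (sdMat MM) p q
        + blForm (sdMat MM) q p + blForm (sdMat MM) q q := by
      rw [hypq]
      rw [show (fun u => p u + q u) = p + q from rfl]
      rw [blForm_add_left', blForm_add_right', blForm_add_right']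
      abel
    have e3 : blForm MM (fun u => p u - q u) (fun u => p u - q u)
        = blForm MM p p - blForm MM p q - blForm MM q p + blForm MM q q := by
      rw [show (fun u => p u - q u) = p - q from rfl]
      rw [blForm_sub_left', blForm_sub_right', blForm_sub_right']
      abel
    have e4 : blForm (sdMat MM) (fun u => p u - q u) (fun u => p u - q u)
        = blForm (sdMat MM) p p - blForm (sdMat MM) p q - blForm (sdMat MM) q p
          + blForm (sdMat MM) q q := by
      rw [show (fun u => p u - q u) = p - q from rfl]
      rw [blForm_sub_left', blForm_sub_right', blForm_sub_right']
      abel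
    rw [e1, e2, e3, e4]
    simp only [smul_add, smul_sub, add_nsmul, one_nsmul]
    abel
  have hfinal : 0 ≤ 2 • (n • blForm (sdMat MM) p p - blForm MM p p)
        + 2 • (n • blForm (sdMat MM) q q - blForm MM q q)
        + ((n+2) • blForm MM y y - n • blForm (sdMat MM) y y) := by
    rw [hkey]
    have h1 : 0 ≤ n • blForm (sdMat MM) (fun u => p u - q u) (fun u => p u - q u)
        - blForm MM (fun u => p u - q u) (fun u => p u - q u) := F_nonneg hMM _
    have h2 : 0 ≤ (n+1) • blForm MM y y := nsmul_nonneg (hMM y) (n+1)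
    exact add_nonneg h1 h2
  refine le_trans ?_ (add_le_add_left hge _)
  rw [hpair]
  exact hfinal
end Core3

section Core4
variable {A : Type*} [Ring A] [StarRing A] [PartialOrder A] [StarOrderedRing A]
  [Module ℂ A] [StarModule ℂ A] [IsScalarTower ℂ A A] [SMulCommClass ℂ A A]
variable {n k : ℕ} (hk : 2 ≤ k) (MM : Matrix (Fin n) (Fin n) A)

lemma sdMat_symm (u v : Fin n) : sdMat MM u v = sdMat MM v u := by
  unfold sdMat
  by_cases h : u = v
  · subst h; rfl
  · rw [if_neg h, if_neg (Ne.symm h)]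

lemma sdMat_transpose : sdMat (Matrix.transpose MM) = sdMat MM := by
  funext u v
  unfold sdMat
  simp [Matrix.transpose_apply]

/-- the B-part of the partial transpose -/
def QBgam : Matrix ((Fin n × Fin 2) × Fin k) ((Fin n × Fin 2) × Fin k) A :=
  fun a b => if a.2 = emb hk b.1.2 ∧ b.2 = emb hk a.1.2 then
    (n+2) • (Matrix.transpose MM) a.1.1 b.1.1 - n • sdMat MM a.1.1 b.1.1 else 0

/-- the partial transpose of the certificate, entrywise -/
lemma qgamma_eq (u v : Fin n) (s s' : Fin 2) (t t' : Fin k) :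
    (QAmat (k := k) MM + QBmat hk MM) ((v,s'),t) ((u,s),t')
      = (QAmat (k := k) (Matrix.transpose MM) + QBgam hk MM) ((u,s),t) ((v,s'),t') := by
  rw [Matrix.add_apply, Matrix.add_apply]
  congr 1
  · show (if s' = s ∧ t = t' then (2*n) • sdMat MM v u - 2 • MM v u else 0)
      = (if s = s' ∧ t = t' then
          (2*n) • sdMat (Matrix.transpose MM) u v - 2 • (Matrix.transpose MM) u v else 0)
    by_cases h : s = s' ∧ t = t'
    · rw [if_pos ⟨h.1.symm, h.2⟩, if_pos h]
      rw [sdMat_transpose, Matrix.transpose_apply, sdMat_symm]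
    · rw [if_neg (fun hh => h ⟨hh.1.symm, hh.2⟩), if_neg h]
  · show (if t = emb hk s' ∧ t' = emb hk s then (n+2) • MM v u - n • sdMat MM v u else 0)
      = (if t = emb hk s' ∧ t' = emb hk s then
          (n+2) • (Matrix.transpose MM) u v - n • sdMat MM u v else 0)
    by_cases h : t = emb hk s' ∧ t' = emb hk s
    · rw [if_pos h, if_pos h, Matrix.transpose_apply, sdMat_symm]
    · rw [if_neg h, if_neg h]
end Core4

section Core5
variable {A : Type*} [Ring A] [StarRing A] [PartialOrder A] [StarOrderedRing A]
  [Module ℂ A] [StarModule ℂ A] [IsScalarTower ℂ A A] [SMulCommClass ℂ A A]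
variable {n k : ℕ} (hk : 2 ≤ k) (MM : Matrix (Fin n) (Fin n) A)

lemma qbgam_form (x : (Fin n × Fin 2) × Fin k → A) :
    blForm (QBgam hk MM) x x
      = ∑ s : Fin 2, ∑ s' : Fin 2,
          ((n+2) • blForm (Matrix.transpose MM)
              (fun u => x ((u,s), emb hk s')) (fun u => x ((u,s'), emb hk s))
            - n • blForm (sdMat MM)
              (fun u => x ((u,s), emb hk s')) (fun u => x ((u,s'), emb hk s))) := by
  have main : blForm (QBgam hk MM) x x
      = ∑ s : Fin 2, ∑ s' : Fin 2, ∑ u : Fin n, ∑ v : Fin n,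
          ((n+2) • (star (x ((u,s), emb hk s')) * (Matrix.transpose MM) u v
              * x ((v,s'), emb hk s))
            - n • (star (x ((u,s), emb hk s')) * sdMat MM u v
              * x ((v,s'), emb hk s))) := by
    unfold blForm QBgam
    simp only [Fintype.sum_prod_type]
    have inner : ∀ (u v : Fin n) (s s' : Fin 2) (t : Fin k) (t' : Fin k),
        star (x ((u,s),t)) * (if t = emb hk s' ∧ t' = emb hk s then
          (n+2) • (Matrix.transpose MM) u v - n • sdMat MM u v else 0) * x ((v,s'),t')
        = if t = emb hk s' then (if t' = emb hk s then
            ((n+2) • (star (x ((u,s),t)) * (Matrix.transpose MM) u v * x ((v,s'),t'))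
              - n • (star (x ((u,s),t)) * sdMat MM u v * x ((v,s'),t'))) else 0) else 0 := by
      intro u v s s' t t'
      rw [ite_and]
      split_ifs with h1 h2
      · rw [mul_sub, sub_mul, mul_smul_comm, mul_smul_comm, smul_mul_assoc,
          smul_mul_assoc]
      · simp
      · simp
    simp only [inner]
    -- reorder so that the `t` sum is innermost, collapse the two flag sums
    calc ∑ u : Fin n, ∑ s : Fin 2, ∑ t : Fin k, ∑ v : Fin n, ∑ s' : Fin 2, ∑ t' : Fin k,
          (if t = emb hk s' then (if t' = emb hk s then
            ((n+2) • (star (x ((u,s),t)) * (Matrix.transpose MM) u v * x ((v,s'),t'))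
              - n • (star (x ((u,s),t)) * sdMat MM u v * x ((v,s'),t'))) else 0) else 0)
        = ∑ u : Fin n, ∑ s : Fin 2, ∑ v : Fin n, ∑ t : Fin k, ∑ s' : Fin 2, ∑ t' : Fin k,
          (if t = emb hk s' then (if t' = emb hk s then
            ((n+2) • (star (x ((u,s),t)) * (Matrix.transpose MM) u v * x ((v,s'),t'))
              - n • (star (x ((u,s),t)) * sdMat MM u v * x ((v,s'),t'))) else 0) else 0) :=
          Finset.sum_congr rfl fun u _ => Finset.sum_congr rfl fun s _ => Finset.sum_comm
      _ = ∑ u : Fin n, ∑ s : Fin 2, ∑ v : Fin n, ∑ s' : Fin 2, ∑ t : Fin k, ∑ t' : Fin k,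
          (if t = emb hk s' then (if t' = emb hk s then
            ((n+2) • (star (x ((u,s),t)) * (Matrix.transpose MM) u v * x ((v,s'),t'))
              - n • (star (x ((u,s),t)) * sdMat MM u v * x ((v,s'),t'))) else 0) else 0) :=
          Finset.sum_congr rfl fun u _ => Finset.sum_congr rfl fun s _ =>
            Finset.sum_congr rfl fun v _ => Finset.sum_comm
      _ = ∑ u : Fin n, ∑ s : Fin 2, ∑ v : Fin n, ∑ s' : Fin 2,
          ((n+2) • (star (x ((u,s), emb hk s')) * (Matrix.transpose MM) u v
              * x ((v,s'), emb hk s))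
            - n • (star (x ((u,s), emb hk s')) * sdMat MM u v * x ((v,s'), emb hk s))) := by
          refine Finset.sum_congr rfl fun u _ => Finset.sum_congr rfl fun s _ =>
            Finset.sum_congr rfl fun v _ => Finset.sum_congr rfl fun s' _ => ?_
          simp only [Finset.sum_ite_irrel, Finset.sum_const_zero, Finset.sum_ite_eq',
            Finset.mem_univ, if_true]
      _ = ∑ s : Fin 2, ∑ s' : Fin 2, ∑ u : Fin n, ∑ v : Fin n,
          ((n+2) • (star (x ((u,s), emb hk s')) * (Matrix.transpose MM) u v
              * x ((v,s'), emb hk s))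
            - n • (star (x ((u,s), emb hk s')) * sdMat MM u v * x ((v,s'), emb hk s))) := by
          rw [Finset.sum_comm]
          refine Finset.sum_congr rfl fun s _ => ?_
          calc ∑ u : Fin n, ∑ v : Fin n, ∑ s' : Fin 2, _
              = ∑ u : Fin n, ∑ s' : Fin 2, ∑ v : Fin n, _ :=
                Finset.sum_congr rfl fun u _ => Finset.sum_comm
            _ = ∑ s' : Fin 2, ∑ u : Fin n, ∑ v : Fin n, _ := Finset.sum_comm
  rw [main]
  refine Finset.sum_congr rfl fun s _ => Finset.sum_congr rfl fun s' _ => ?_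
  unfold blForm
  rw [Finset.smul_sum, Finset.smul_sum, ← Finset.sum_sub_distrib]
  refine Finset.sum_congr rfl fun u _ => ?_
  rw [Finset.smul_sum, Finset.smul_sum, ← Finset.sum_sub_distrib]
end Core5

section Core6
variable {A : Type*} [Ring A] [StarRing A] [PartialOrder A] [StarOrderedRing A]
  [Module ℂ A] [StarModule ℂ A] [IsScalarTower ℂ A A] [SMulCommClass ℂ A A]
variable {n k : ℕ} (hk : 2 ≤ k) {MM : Matrix (Fin n) (Fin n) A}

variable (hMM : ∀ x : Fin n → A, 0 ≤ blForm MM x x)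
include hMM

lemma Fp_nonneg (hn : 2 ≤ n) (w : Fin n → A) :
    0 ≤ n • blForm (sdMat MM) w w - blForm (Matrix.transpose MM) w w := by
  obtain ⟨m, rfl⟩ : ∃ m, n = m + 2 := ⟨n - 2, by omega⟩
  have h1 : blForm (Matrix.transpose MM) w w ≤ blForm (sdMat MM) w w := key_mt_le hMM w
  have h2 : blForm (sdMat MM) w w ≤ (m+2) • blForm (sdMat MM) w w := by
    have h3 : 0 ≤ (m+1) • blForm (sdMat MM) w w :=
      nsmul_nonneg (sd_nonneg hMM w w rfl) (m+1)
    calc blForm (sdMat MM) w w ≤ (m+1) • blForm (sdMat MM) w w + blForm (sdMat MM) w w :=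
          le_add_of_nonneg_left h3
      _ = (m+2) • blForm (sdMat MM) w w := (succ_nsmul _ (m+1)).symm
  rw [sub_nonneg]
  exact le_trans h1 h2

theorem qgam_pos (hn : 2 ≤ n) (x : (Fin n × Fin 2) × Fin k → A) :
    0 ≤ blForm (QAmat (k := k) (Matrix.transpose MM) + QBgam hk MM) x x := by
  classical
  obtain ⟨m, rfl⟩ : ∃ m, n = m + 2 := ⟨n - 2, by omega⟩
  rw [blForm_add_matrix', qa_form, qbgam_form]
  simp only [sdMat_transpose]
  set c : Fin 2 × Fin k → Fin (m+2) → A := fun pr => fun u => x ((u, pr.1), pr.2) with hc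
  set p : Fin (m+2) → A := c (0, emb hk 0) with hp
  set q : Fin (m+2) → A := c (1, emb hk 1) with hq
  set r : Fin (m+2) → A := c (0, emb hk 1) with hr
  set o : Fin (m+2) → A := c (1, emb hk 0) with ho
  -- A part as a sum over pairs
  have hsumA : (∑ s : Fin 2, ∑ t : Fin k,
      ((2*(m+2)) • blForm (sdMat MM) (fun u => x ((u,s),t)) (fun u => x ((u,s),t))
        - 2 • blForm (Matrix.transpose MM) (fun u => x ((u,s),t)) (fun u => x ((u,s),t))))
      = ∑ pr : Fin 2 × Fin k, (2:ℕ) • ((m+2) • blForm (sdMat MM) (c pr) (c pr)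
          - blForm (Matrix.transpose MM) (c pr) (c pr)) := by
    rw [Fintype.sum_prod_type]
    exact Finset.sum_congr rfl fun s _ => Finset.sum_congr rfl fun t _ =>
      (two_smul_F _ _)
  rw [hsumA]
  -- the four relevant flag pairs
  have hee : emb hk (0:Fin 2) ≠ emb hk 1 := fun h =>
    (by decide : ¬((0:Fin 2) = 1)) (emb_inj hk h)
  set P00 : Fin 2 × Fin k := (0, emb hk 0) with hP00
  set P11 : Fin 2 × Fin k := (1, emb hk 1) with hP11
  set P01 : Fin 2 × Fin k := (0, emb hk 1) with hP01
  set P10 : Fin 2 × Fin k := (1, emb hk 0) with hP10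
  have ne1 : P00 ≠ P11 := fun h => (by decide : ¬((0:Fin 2) = 1)) (congrArg Prod.fst h)
  have ne2 : P00 ≠ P01 := fun h => hee (congrArg Prod.snd h)
  have ne3 : P00 ≠ P10 := fun h => (by decide : ¬((0:Fin 2) = 1)) (congrArg Prod.fst h)
  have ne4 : P11 ≠ P01 := fun h => (by decide : ¬((1:Fin 2) = 0)) (congrArg Prod.fst h)
  have ne5 : P11 ≠ P10 := fun h => hee.symm (congrArg Prod.snd h)
  have ne6 : P01 ≠ P10 := fun h => (by decide : ¬((0:Fin 2) = 1)) (congrArg Prod.fst h)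
  set D4 : Finset (Fin 2 × Fin k) := insert P00 (insert P11 (insert P01 {P10})) with hD4
  set G : Fin 2 × Fin k → A := fun pr => (2:ℕ) • ((m+2) • blForm (sdMat MM) (c pr) (c pr)
      - blForm (Matrix.transpose MM) (c pr) (c pr)) with hG
  have hD4sum : ∑ pr ∈ D4, G pr = G P00 + G P11 + G P01 + G P10 := by
    rw [hD4, Finset.sum_insert (by simp [ne1, ne2, ne3]),
      Finset.sum_insert (by simp [ne4, ne5]), Finset.sum_insert (by simp [ne6]),
      Finset.sum_singleton]
    abel
  have hsub : ∑ pr ∈ D4, G pr ≤ ∑ pr : Fin 2 × Fin k, G pr := by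
    refine Finset.sum_le_sum_of_subset_of_nonneg (Finset.subset_univ _) fun pr _ _ => ?_
    exact nsmul_nonneg (Fp_nonneg hMM (by omega) (c pr)) 2
  refine le_trans ?_ (add_le_add_left hsub _)
  rw [hD4sum]
  -- expand the B part over the four flag pairs
  simp only [Fin.sum_univ_two]
  -- abbreviations for the forms
  set SD := sdMat MM with hSD
  set MT := Matrix.transpose MM with hMT
  -- group identities
  have hG1 : G P00 + ((m+2+2) • blForm MT p p - (m+2) • blForm SD p p)
      = (m+2) • (blForm SD p p + blForm MT p p) := by
    rw [hG]
    simp only [smul_add, smul_sub, add_nsmul, one_nsmul]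
    abel
  have hG2 : G P11 + ((m+2+2) • blForm MT q q - (m+2) • blForm SD q q)
      = (m+2) • (blForm SD q q + blForm MT q q) := by
    rw [hG]
    simp only [smul_add, smul_sub, add_nsmul, one_nsmul]
    abel
  have hG1pos : 0 ≤ (m+2) • (blForm SD p p + blForm MT p p) :=
    nsmul_nonneg (key_mt_ge hMM p) (m+2)
  have hG2pos : 0 ≤ (m+2) • (blForm SD q q + blForm MT q q) :=
    nsmul_nonneg (key_mt_ge hMM q) (m+2)
  -- the (r,o) group
  set σ : Fin (m+2) → A := fun u => r u + o u with hσ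
  set δ : Fin (m+2) → A := fun u => r u - o u with hδ
  have hG3 : (2:ℕ) • (G P01 + G P10
        + ((m+2+2) • blForm MT r o - (m+2) • blForm SD r o)
        + ((m+2+2) • blForm MT o r - (m+2) • blForm SD o r))
      = (m+2) • (blForm SD σ σ + blForm MT σ σ)
        + (m+6) • (blForm SD δ δ - blForm MT δ δ)
        + (2*m) • blForm SD δ δ := by
    have eσ : ∀ (N : Matrix (Fin (m+2)) (Fin (m+2)) A), blForm N σ σ
        = blForm N r r + blForm N r o + blForm N o r + blForm N o o := by
      intro N
      rw [hσ, show (fun u => r u + o u) = r + o from rfl]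
      rw [blForm_add_left', blForm_add_right', blForm_add_right']
      abel
    have eδ : ∀ (N : Matrix (Fin (m+2)) (Fin (m+2)) A), blForm N δ δ
        = blForm N r r - blForm N r o - blForm N o r + blForm N o o := by
      intro N
      rw [hδ, show (fun u => r u - o u) = r - o from rfl]
      rw [blForm_sub_left', blForm_sub_right', blForm_sub_right']
      abel
    simp only [hG]
    rw [← hr, ← ho]
    rw [eσ, eσ, eδ, eδ]
    simp only [smul_add, smul_sub, add_nsmul, one_nsmul]
    module
  have hG3pos : 0 ≤ G P01 + G P10
        + ((m+2+2) • blForm MT r o - (m+2) • blForm SD r o)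
        + ((m+2+2) • blForm MT o r - (m+2) • blForm SD o r) := by
    refine aux_unsmul_nat' (c := 2) (by norm_num) ?_
    rw [hG3]
    have c1 : 0 ≤ (m+2) • (blForm SD σ σ + blForm MT σ σ) :=
      nsmul_nonneg (key_mt_ge hMM σ) (m+2)
    have c2 : 0 ≤ (m+6) • (blForm SD δ δ - blForm MT δ δ) :=
      nsmul_nonneg (sub_nonneg.mpr (key_mt_le hMM δ)) (m+6)
    have c3 : 0 ≤ (2*m) • blForm SD δ δ :=
      nsmul_nonneg (sd_nonneg hMM δ δ rfl) (2*m)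
    exact add_nonneg (add_nonneg c1 c2) c3
  -- combine everything
  have := add_nonneg (add_nonneg (hG1 ▸ hG1pos) (hG2 ▸ hG2pos)) hG3pos
  calc (0:A) ≤ (G P00 + ((m+2+2) • blForm MT p p - (m+2) • blForm SD p p))
        + (G P11 + ((m+2+2) • blForm MT q q - (m+2) • blForm SD q q))
        + (G P01 + G P10
          + ((m+2+2) • blForm MT r o - (m+2) • blForm SD r o)
          + ((m+2+2) • blForm MT o r - (m+2) • blForm SD o r)) := this
    _ = G P00 + G P11 + G P01 + G P10
        + (((m+2+2) • blForm MT p p - (m+2) • blForm SD p p)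
          + ((m+2+2) • blForm MT r o - (m+2) • blForm SD r o)
          + (((m+2+2) • blForm MT o r - (m+2) • blForm SD o r)
            + ((m+2+2) • blForm MT q q - (m+2) • blForm SD q q))) := by abel
end Core6


section Glue
variable {R : Type*} [NonUnitalRing R] [StarRing R] [PartialOrder R]

lemma matPos_iff_blForm' {ι : Type*} [Fintype ι] (M : Matrix ι ι R) :
    MatPos M ↔ ∀ x : ι → R, 0 ≤ blForm M x x := by
  refine forall_congr' fun x => ?_
  have : dotProduct (star x) (M.mulVec x) = blForm M x x := by
    unfold blForm dotProduct Matrix.mulVec dotProduct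
    refine Finset.sum_congr rfl fun i _ => ?_
    rw [Pi.star_apply, Finset.mul_sum]
    exact Finset.sum_congr rfl fun v _ => (mul_assoc _ _ _).symm
  rw [this]

lemma blForm_reindex {ι κ : Type*} [Fintype ι] [Fintype κ] (e : ι ≃ κ)
    (N : Matrix κ κ R) (w : κ → R) :
    blForm (N.submatrix ⇑e ⇑e) (fun i => w (e i)) (fun i => w (e i)) = blForm N w w := by
  unfold blForm
  refine (Finset.sum_congr rfl fun i _ => ?_).trans
    (Equiv.sum_comp e (fun a => ∑ b, star (w a) * N a b * w b))
  exact Equiv.sum_comp e (fun b => star (w (e i)) * N (e i) b * w b)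
end Glue

section Ampl
variable {A C : Type*} [AddCommMonoid A] [Module ℂ A] [AddCommMonoid C] [Module ℂ C]
variable {k : ℕ}

lemma amplPos_add (α β : Matrix (Fin k) (Fin k) A →ₗ[ℂ] Matrix (Fin k) (Fin k) C)
    (n : ℕ) (N : Matrix (Fin n × Fin k) (Fin n × Fin k) A) :
    amplPos (α + β) n N = amplPos α n N + amplPos β n N := by
  funext p q
  show (α + β) _ p.2 q.2 = _
  rw [LinearMap.add_apply]
  rfl

lemma amplPos_mapMatrix {A C : Type*} [AddCommMonoid A] [Module ℂ A] [AddCommMonoid C]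
    [Module ℂ C] (τ : A →ₗ[ℂ] C) (n : ℕ)
    (N : Matrix (Fin n × Fin k) (Fin n × Fin k) A) :
    amplPos (LinearMap.mapMatrix τ) n N = N.map τ := by
  funext p q
  show (LinearMap.mapMatrix τ) _ p.2 q.2 = _
  rw [LinearMap.mapMatrix_apply]
  rfl
end Ampl

section Pad
variable {R : Type*} [NonUnitalRing R] [StarRing R] {n : ℕ}

def padM (M : Matrix (Fin n) (Fin n) R) : Matrix (Fin (n+2)) (Fin (n+2)) R :=
  fun i j => if h : (i:ℕ) < n ∧ (j:ℕ) < n then M ⟨i,h.1⟩ ⟨j,h.2⟩ else 0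

def padV (z : Fin n → R) : Fin (n+2) → R :=
  fun i => if h : (i:ℕ) < n then z ⟨i,h⟩ else 0

lemma padM_natAdd_row (M : Matrix (Fin n) (Fin n) R) (i : Fin 2) (j : Fin (n+2)) :
    padM M (Fin.natAdd n i) j = 0 := by
  apply dif_neg
  rintro ⟨h1, -⟩
  have : ((Fin.natAdd n i : Fin (n+2)) : ℕ) = n + i := rfl
  omega

lemma padM_natAdd_col (M : Matrix (Fin n) (Fin n) R) (i : Fin (n+2)) (j : Fin 2) :
    padM M i (Fin.natAdd n j) = 0 := by
  apply dif_neg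
  rintro ⟨-, h2⟩
  have : ((Fin.natAdd n j : Fin (n+2)) : ℕ) = n + j := rfl
  omega

lemma padM_castAdd (M : Matrix (Fin n) (Fin n) R) (u v : Fin n) :
    padM M (Fin.castAdd 2 u) (Fin.castAdd 2 v) = M u v := by
  have hu : ((Fin.castAdd 2 u : Fin (n+2)) : ℕ) = (u:ℕ) := rfl
  have hv : ((Fin.castAdd 2 v : Fin (n+2)) : ℕ) = (v:ℕ) := rfl
  rw [padM, dif_pos ⟨by omega, by omega⟩]
  congr 1

lemma padV_natAdd (z : Fin n → R) (j : Fin 2) : padV z (Fin.natAdd n j) = 0 := by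
  apply dif_neg
  intro h1
  have : ((Fin.natAdd n j : Fin (n+2)) : ℕ) = n + j := rfl
  omega

lemma padV_castAdd (z : Fin n → R) (u : Fin n) : padV z (Fin.castAdd 2 u) = z u := by
  have hu : ((Fin.castAdd 2 u : Fin (n+2)) : ℕ) = (u:ℕ) := rfl
  rw [padV, dif_pos (by omega)]
  congr 1

lemma padM_blForm (M : Matrix (Fin n) (Fin n) R) (x : Fin (n+2) → R) :
    blForm (padM M) x x = blForm M (fun u => x (Fin.castAdd 2 u))
      (fun u => x (Fin.castAdd 2 u)) := by
  unfold blForm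
  rw [Fin.sum_univ_add (f := fun i => ∑ j, star (x i) * padM M i j * x j)]
  have h2 : ∑ i : Fin 2, ∑ j, star (x (Fin.natAdd n i)) * padM M (Fin.natAdd n i) j * x j
      = 0 := by
    refine Finset.sum_eq_zero fun i _ => Finset.sum_eq_zero fun j _ => ?_
    rw [padM_natAdd_row, mul_zero, zero_mul]
  rw [h2, add_zero]
  refine Finset.sum_congr rfl fun u _ => ?_
  rw [Fin.sum_univ_add (f := fun j => star (x (Fin.castAdd 2 u)) * padM M _ j * x j)]
  have h3 : ∑ j : Fin 2, star (x (Fin.castAdd 2 u)) * padM M (Fin.castAdd 2 u)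
      (Fin.natAdd n j) * x (Fin.natAdd n j) = 0 := by
    refine Finset.sum_eq_zero fun j _ => ?_
    rw [padM_natAdd_col, mul_zero, zero_mul]
  rw [h3, add_zero]
  refine Finset.sum_congr rfl fun v _ => ?_
  rw [padM_castAdd]
end Pad


section Extract
variable {A C : Type*} [Ring A] [StarRing A] [Module ℂ A]
  [Ring C] [StarRing C] [Module ℂ C]
variable {n k : ℕ} (hk : 2 ≤ k)

lemma extraction_eq (τ : A →ₗ[ℂ] C) (MM : Matrix (Fin n) (Fin n) A) (zt : Fin n → C) :
    blForm (((QAmat (k := k) MM + QBmat hk MM)).map τ)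
        (fun a => if a.2 = emb hk a.1.2 then zt a.1.1 else 0)
        (fun a => if a.2 = emb hk a.1.2 then zt a.1.1 else 0)
      = (4*n+4) • ∑ u, ∑ v, star (zt u) * τ (MM u v) * zt v := by
  unfold blForm
  simp only [Fintype.sum_prod_type]
  have hstep : ∀ (u v : Fin n) (s s' : Fin 2) (t t' : Fin k),
      star (if t = emb hk s then zt u else 0)
        * ((QAmat (k:=k) MM + QBmat hk MM).map τ ((u,s),t) ((v,s'),t'))
        * (if t' = emb hk s' then zt v else 0)
      = if t = emb hk s then (if t' = emb hk s' then
          star (zt u) * τ ((QAmat (k:=k) MM + QBmat hk MM) ((u,s),t) ((v,s'),t')) * zt v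
          else 0) else 0 := by
    intro u v s s' t t'
    rw [Matrix.map_apply]
    split_ifs <;> simp
  simp only [hstep]
  simp only [Finset.sum_ite_irrel, Finset.sum_const_zero, Finset.sum_ite_eq',
    Finset.mem_univ, if_true]
  have hcomm : ∑ u : Fin n, ∑ s : Fin 2, ∑ v : Fin n, ∑ s' : Fin 2,
      star (zt u) * τ ((QAmat (k:=k) MM + QBmat hk MM) ((u,s), emb hk s)
        ((v,s'), emb hk s')) * zt v
      = ∑ u : Fin n, ∑ v : Fin n, ∑ s : Fin 2, ∑ s' : Fin 2,
      star (zt u) * τ ((QAmat (k:=k) MM + QBmat hk MM) ((u,s), emb hk s)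
        ((v,s'), emb hk s')) * zt v :=
    Finset.sum_congr rfl fun u _ => Finset.sum_comm
  rw [hcomm]
  have hent : ∀ u v : Fin n, ∑ s : Fin 2, ∑ s' : Fin 2,
      star (zt u) * τ ((QAmat (k:=k) MM + QBmat hk MM) ((u,s), emb hk s)
        ((v,s'), emb hk s')) * zt v
      = (4*n+4) • (star (zt u) * τ (MM u v) * zt v) := by
    intro u v
    have pull : ∑ s : Fin 2, ∑ s' : Fin 2,
        star (zt u) * τ ((QAmat (k:=k) MM + QBmat hk MM) ((u,s), emb hk s)
          ((v,s'), emb hk s')) * zt v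
        = star (zt u) * τ (∑ s : Fin 2, ∑ s' : Fin 2,
            (QAmat (k:=k) MM + QBmat hk MM) ((u,s), emb hk s) ((v,s'), emb hk s')) * zt v := by
      rw [map_sum, Finset.mul_sum, Finset.sum_mul]
      refine Finset.sum_congr rfl fun s _ => ?_
      rw [map_sum, Finset.mul_sum, Finset.sum_mul]
    rw [pull]
    have hE : (∑ s : Fin 2, ∑ s' : Fin 2,
        (QAmat (k:=k) MM + QBmat hk MM) ((u,s), emb hk s) ((v,s'), emb hk s'))
        = (4*n+4) • MM u v := by
      have hA : ∀ s s' : Fin 2, QAmat (k:=k) MM ((u,s), emb hk s) ((v,s'), emb hk s')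
          = if s = s' then (2*n) • sdMat MM u v - 2 • MM u v else 0 := by
        intro s s'
        show (if s = s' ∧ emb hk s = emb hk s' then (2*n) • sdMat MM u v - 2 • MM u v else 0)
          = _
        by_cases h : s = s'
        · rw [if_pos ⟨h, by rw [h]⟩, if_pos h]
        · rw [if_neg (fun hh => h hh.1), if_neg h]
      have hB : ∀ s s' : Fin 2, QBmat hk MM ((u,s), emb hk s) ((v,s'), emb hk s')
          = (n+2) • MM u v - n • sdMat MM u v := by
        intro s s'
        exact if_pos ⟨rfl, rfl⟩
      have : ∀ s s' : Fin 2, (QAmat (k:=k) MM + QBmat hk MM) ((u,s), emb hk s)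
          ((v,s'), emb hk s')
          = (if s = s' then (2*n) • sdMat MM u v - 2 • MM u v else 0)
            + ((n+2) • MM u v - n • sdMat MM u v) := by
        intro s s'
        rw [Matrix.add_apply, hA, hB]
      simp only [this]
      rw [Finset.sum_congr rfl (fun s (_ : s ∈ Finset.univ) => Finset.sum_add_distrib),
        Finset.sum_add_distrib]
      have c1 : ∑ s : Fin 2, ∑ s' : Fin 2,
          (if s = s' then (2*n) • sdMat MM u v - 2 • MM u v else 0)
          = (2:ℕ) • ((2*n) • sdMat MM u v - 2 • MM u v) := by
        have : ∀ s : Fin 2, ∑ s' : Fin 2,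
            (if s = s' then (2*n) • sdMat MM u v - 2 • MM u v else 0)
            = (2*n) • sdMat MM u v - 2 • MM u v := by
          intro s
          rw [Finset.sum_ite_eq Finset.univ s]
          simp
        simp only [this]
        rw [Finset.sum_const, Finset.card_univ]
        congr 1
      have c2 : ∑ _s : Fin 2, ∑ _s' : Fin 2, ((n+2) • MM u v - n • sdMat MM u v)
          = (2:ℕ) • ((2:ℕ) • ((n+2) • MM u v - n • sdMat MM u v)) := by
        rw [Finset.sum_const, Finset.card_univ]
        congr 1
        rw [Finset.sum_const, Finset.card_univ]
        congr 1
      rw [c1, c2]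
      module
    rw [hE, map_nsmul, mul_smul_comm, smul_mul_assoc]
  simp only [hent]
  rw [Finset.smul_sum]
  exact Finset.sum_congr rfl fun u _ => (Finset.smul_sum).symm
end Extract

/-- Theorem 3.1, Piani–Mora generalized: let `τ : A → C` be a linear map
between unital C*-algebras.  If for some `k ≥ 2` the map `τ ⊗ id_k : M_k(A) → M_k(C)` is
decomposable, i.e. a sum of a completely positive and a completely copositive map, then
`τ` is completely positive. -/
theorem completelyPositive_of_mapMatrix_decomposable {A C : Type*}
    [CStarAlgebra A] [PartialOrder A] [StarOrderedRing A]
    [CStarAlgebra C] [PartialOrder C] [StarOrderedRing C]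
    (τ : A →ₗ[ℂ] C) (k : ℕ) (hk : 2 ≤ k)
    (hdec : ∃ α β : Matrix (Fin k) (Fin k) A →ₗ[ℂ] Matrix (Fin k) (Fin k) C,
      IsCPBlock α ∧ IsCCPBlock β ∧ τ.mapMatrix = α + β) :
    IsCompletelyPositive τ := by
  obtain ⟨α, β, hα, hβ, hτ⟩ := hdec
  intro n M hM
  rw [matPos_iff_blForm']
  intro z
  -- padded data (so that the outer size is at least 2)
  set MM : Matrix (Fin (n+2)) (Fin (n+2)) A := padM M with hMMdef
  set zt : Fin (n+2) → C := padV z with hztdef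
  have hMMpos : ∀ x : Fin (n+2) → A, 0 ≤ blForm MM x x := by
    intro x
    rw [hMMdef, padM_blForm]
    exact (matPos_iff_blForm' M).mp hM _
  -- index bookkeeping
  set e : Fin (n+2) × Fin 2 ≃ Fin ((n+2)*2) := finProdFinEquiv with he
  set gE : (Fin ((n+2)*2) × Fin k) ≃ ((Fin (n+2) × Fin 2) × Fin k) :=
    Equiv.prodCongr e.symm (Equiv.refl (Fin k)) with hgE
  set Qtot : Matrix ((Fin (n+2) × Fin 2) × Fin k) ((Fin (n+2) × Fin 2) × Fin k) A :=
    QAmat (k := k) MM + QBmat hk MM with hQtot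
  set Qgam : Matrix ((Fin (n+2) × Fin 2) × Fin k) ((Fin (n+2) × Fin 2) × Fin k) A :=
    QAmat (k := k) (Matrix.transpose MM) + QBgam hk MM with hQgam
  set P : Matrix (Fin ((n+2)*2) × Fin k) (Fin ((n+2)*2) × Fin k) A :=
    Qtot.submatrix ⇑gE ⇑gE with hPdef
  set PG : Matrix (Fin ((n+2)*2) × Fin k) (Fin ((n+2)*2) × Fin k) A :=
    Qgam.submatrix ⇑gE ⇑gE with hPGdef
  -- the two positivity certificates
  have hPpos : MatPos P := by
    rw [matPos_iff_blForm']
    intro x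
    rw [hPdef, blForm_submatrix]
    exact q_pos hk hMMpos _
  have hPGpos : MatPos PG := by
    rw [matPos_iff_blForm']
    intro x
    rw [hPGdef, blForm_submatrix]
    exact qgam_pos hk hMMpos (by omega) _
  have h1 : MatPos (amplPos α ((n+2)*2) P) := hα _ _ hPpos
  have h2 : MatPos (amplCopos β ((n+2)*2) PG) := hβ _ _ hPGpos
  -- the partial transpose relation
  have hrel : amplCopos β ((n+2)*2) PG = amplPos β ((n+2)*2) P := by
    funext p q
    unfold amplCopos amplPos
    rw [Matrix.of_apply, Matrix.of_apply]
    have harg : (Matrix.of fun st tt => PG (q.1, st) (p.1, tt))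
        = (Matrix.of fun st tt => P (p.1, st) (q.1, tt)) := by
      funext st tt
      rw [Matrix.of_apply, Matrix.of_apply]
      show Qgam (gE (q.1, st)) (gE (p.1, tt)) = Qtot (gE (p.1, st)) (gE (q.1, tt))
      rw [hQgam, hQtot]
      exact (qgamma_eq hk MM (e.symm q.1).1 (e.symm p.1).1 (e.symm q.1).2 (e.symm p.1).2
        st tt).symm
    rw [harg]
  have h2' : MatPos (amplPos β ((n+2)*2) P) := hrel ▸ h2
  -- positivity of the τ-image of the certificate
  have h3 : MatPos (P.map τ) := by
    rw [← amplPos_mapMatrix τ ((n+2)*2) P, hτ, amplPos_add]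
    rw [matPos_iff_blForm']
    intro x
    rw [blForm_add_matrix']
    exact add_nonneg ((matPos_iff_blForm' _).mp h1 x) ((matPos_iff_blForm' _).mp h2' x)
  -- evaluate at the extraction vector
  set w : ((Fin (n+2) × Fin 2) × Fin k) → C :=
    fun a => if a.2 = emb hk a.1.2 then zt a.1.1 else 0 with hw
  have h4 := (matPos_iff_blForm' _).mp h3 (fun pq => w (gE pq))
  have h5 : P.map τ = (Qtot.map τ).submatrix ⇑gE ⇑gE := rfl
  rw [h5, blForm_reindex gE (Qtot.map τ) w, hw, hQtot, extraction_eq hk τ MM zt] at h4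
  have h6 : 0 ≤ ∑ u, ∑ v, star (zt u) * τ (MM u v) * zt v :=
    aux_unsmul_nat' (by omega) h4
  -- remove the padding
  have h7 : ∑ u : Fin (n+2), ∑ v, star (zt u) * τ (MM u v) * zt v
      = blForm (M.map τ) z z := by
    rw [hztdef, hMMdef]
    rw [Fin.sum_univ_add (f := fun u => ∑ v, star (padV z u) * τ (padM M u v) * padV z v)]
    have hz2 : ∑ u : Fin 2, ∑ v, star (padV z (Fin.natAdd n u)) * τ (padM M (Fin.natAdd n u) v)
        * padV z v = 0 := by
      refine Finset.sum_eq_zero fun u _ => Finset.sum_eq_zero fun v _ => ?_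
      rw [padV_natAdd, star_zero, zero_mul, zero_mul]
    rw [hz2, add_zero]
    refine Finset.sum_congr rfl fun u _ => ?_
    rw [Fin.sum_univ_add (f := fun v => star (padV z (Fin.castAdd 2 u))
      * τ (padM M (Fin.castAdd 2 u) v) * padV z v)]
    have hz3 : ∑ v : Fin 2, star (padV z (Fin.castAdd 2 u))
        * τ (padM M (Fin.castAdd 2 u) (Fin.natAdd n v)) * padV z (Fin.natAdd n v) = 0 := by
      refine Finset.sum_eq_zero fun v _ => ?_
      rw [padV_natAdd, mul_zero]
    rw [hz3, add_zero]
    refine Finset.sum_congr rfl fun v _ => ?_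
    rw [padV_castAdd, padV_castAdd, padM_castAdd]
    rfl
  rw [h7] at h6
  exact h6
end

section
/- Let τ : A → C be a linear map between unital C*-algebras and k ≥ 2. If τ ⊗ id_k = α + β where α is completely positive and β is completely copositive, and if moreover α = α₁ ⊗ id_k and β = β₁ ⊗ id_k for positive linear maps α₁, β₁ : A → C, then β₁ = 0 and τ = α₁. -/
/-- final step in the proof of Theorem 3.1: if `τ ⊗ id_k = α + β` with
`α` completely positive and `β` completely copositive, and moreover `α = α₁ ⊗ id_k`,
`β = β₁ ⊗ id_k` for positive linear maps `α₁, β₁ : A → C`, then `β₁ = 0` and `τ = α₁`. -/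
theorem decomposition_forces_copositive_part_zero {A C : Type*}
    [CStarAlgebra A] [PartialOrder A] [StarOrderedRing A]
    [CStarAlgebra C] [PartialOrder C] [StarOrderedRing C]
    (τ α₁ β₁ : A →ₗ[ℂ] C) (k : ℕ) (hk : 2 ≤ k)
    (α β : Matrix (Fin k) (Fin k) A →ₗ[ℂ] Matrix (Fin k) (Fin k) C)
    (hαCP : IsCPBlock α) (hβCCP : IsCCPBlock β)
    (hsum : (τ.mapMatrix : Matrix (Fin k) (Fin k) A →ₗ[ℂ] Matrix (Fin k) (Fin k) C) = α + β)
    (hα : α = α₁.mapMatrix) (hβ : β = β₁.mapMatrix)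
    (hα₁pos : ∀ a : A, 0 ≤ a → 0 ≤ α₁ a) (hβ₁pos : ∀ a : A, 0 ≤ a → 0 ≤ β₁ a) :
    β₁ = 0 ∧ τ = α₁ := by
  have hk0 : 0 < k := by omega
  have hk1 : 1 < k := by omega
  set i0 : Fin k := ⟨0, hk0⟩ with hi0
  set i1 : Fin k := ⟨1, hk1⟩ with hi1
  have hi01 : i0 ≠ i1 := by
    simp [hi0, hi1, Fin.ext_iff]
  -- Step 1: β₁ vanishes on nonnegative elements
  have key : ∀ a : A, 0 ≤ a → β₁ a = 0 := by
    intro a ha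
    set M : Matrix (Fin k × Fin k) (Fin k × Fin k) A :=
      Matrix.of (fun p q => if p.1 = p.2 ∧ q.1 = q.2 then a else 0) with hM
    have hMpos : MatPos M := by
      intro x
      have hcalc : dotProduct (star x) (M.mulVec x)
          = star (∑ j, x (j, j)) * a * (∑ j, x (j, j)) := by
        simp only [dotProduct, Matrix.mulVec, Pi.star_apply, hM, Matrix.of_apply,
          Fintype.sum_prod_type, ite_and]
        simp only [ite_mul, zero_mul, mul_ite, mul_zero, Finset.sum_ite_eq, Finset.sum_ite_eq',
          Finset.mem_univ, if_true, Finset.sum_ite_irrel, Finset.sum_const_zero]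
        rw [star_sum, mul_assoc, Finset.sum_mul]
        simp only [Finset.mul_sum]
      rw [hcalc]
      exact star_left_conjugate_nonneg ha _
    have hN := hβCCP k M hMpos
    set b := β₁ a with hb
    have hbpos : 0 ≤ b := hβ₁pos a ha
    have hNform : ∀ p q : Fin k × Fin k,
        amplCopos β k M p q = if p.2 = q.1 ∧ q.2 = p.1 then b else 0 := by
      intro p q
      simp only [amplCopos, hβ, LinearMap.mapMatrix_apply, Matrix.map_apply, Matrix.of_apply,
        hM]
      rw [apply_ite β₁, map_zero]
      congr 1
      simp only [eq_iff_iff]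
      constructor
      · rintro ⟨h1, h2⟩; exact ⟨h1.symm, h2.symm⟩
      · rintro ⟨h1, h2⟩; exact ⟨h1.symm, h2.symm⟩
    set x : Fin k × Fin k → C := fun p =>
      if p = (i0, i1) then 1 else if p = (i1, i0) then -1 else 0 with hx
    have hx0 : ∀ p : Fin k × Fin k, p ≠ (i0, i1) → p ≠ (i1, i0) → x p = 0 := by
      intro p h1 h2
      simp [hx, h1, h2]
    have hsum2 : dotProduct (star x) ((amplCopos β k M).mulVec x) = -b - b := by
      have hform : ∀ p : Fin k × Fin k,
          star (x p) * ((amplCopos β k M).mulVec x p)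
            = star (x p) * (b * x (p.2, p.1)) := by
        intro p
        congr 1
        simp only [Matrix.mulVec, dotProduct]
        simp only [hNform, Fintype.sum_prod_type, ite_and, ite_mul, zero_mul]
        rw [Finset.sum_comm]
        simp only [Finset.sum_ite_eq, Finset.mem_univ, if_true]
        simp only [Finset.sum_ite_eq', Finset.mem_univ, if_true]
      have : dotProduct (star x) ((amplCopos β k M).mulVec x)
          = ∑ p : Fin k × Fin k, star (x p) * (b * x (p.2, p.1)) := by
        simp only [dotProduct, Pi.star_apply]
        exact Finset.sum_congr rfl fun p _ => hform p
      rw [this]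
      have hpairne : ((i0, i1) : Fin k × Fin k) ≠ (i1, i0) := by
        intro h
        exact hi01 (congrArg Prod.fst h)
      rw [← Finset.sum_subset (Finset.subset_univ ({(i0, i1), (i1, i0)} :
          Finset (Fin k × Fin k)))]
      · rw [Finset.sum_pair hpairne]
        have e1 : x (i0, i1) = 1 := by simp [hx]
        have e2 : x (i1, i0) = -1 := by simp [hx, hpairne.symm]
        simp only [e1, e2, star_one, one_mul, mul_neg, mul_one, star_neg, neg_mul, neg_neg]
        abel
      · intro p _ hp
        simp only [Finset.mem_insert, Finset.mem_singleton, not_or] at hp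
        rw [hx0 p hp.1 hp.2]
        simp
    have hle : 0 ≤ -b - b := hsum2 ▸ hN x
    have hb0 : b ≤ 0 := by
      have h1 : b + b ≤ 0 := by
        have h2 : 0 ≤ -(b + b) := by
          rw [neg_add, ← sub_eq_add_neg]
          exact hle
        exact neg_nonneg.mp h2
      calc b = 0 + b := (zero_add b).symm
        _ ≤ b + b := add_le_add_left hbpos b
        _ ≤ 0 := h1
    exact le_antisymm hb0 hbpos
  -- Step 2: β₁ = 0 by spanning with nonnegative elements
  have hβ₁zero : β₁ = 0 := by
    ext a
    have hdecomp := CStarAlgebra.linear_combination_nonneg a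
    calc β₁ a = β₁ (((realPart a : A)⁺ - (realPart a : A)⁻)
          + (Complex.I • (imaginaryPart a : A)⁺ - Complex.I • (imaginaryPart a : A)⁻)) := by
            rw [hdecomp]
      _ = 0 := by
          rw [map_add, map_sub, map_sub, map_smul, map_smul,
            key _ (CFC.posPart_nonneg _), key _ (CFC.negPart_nonneg _),
            key _ (CFC.posPart_nonneg _), key _ (CFC.negPart_nonneg _)]
          simp
  refine ⟨hβ₁zero, ?_⟩
  -- Step 3: τ = α₁
  have hmm : (τ.mapMatrix : Matrix (Fin k) (Fin k) A →ₗ[ℂ] Matrix (Fin k) (Fin k) C)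
      = α₁.mapMatrix := by
    rw [hsum, hα, hβ, hβ₁zero]
    ext M i j
    simp [LinearMap.mapMatrix_apply]
  ext a
  have := DFunLike.congr_fun hmm (Matrix.of fun _ _ => a)
  have h2 := congrFun (congrFun (congrArg (fun N => (N : Matrix (Fin k) (Fin k) C)) this) i0) i0
  simpa [LinearMap.mapMatrix_apply] using h2
end
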